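/- arXiv:0907.1257 — 7 statements merged into one kernel-verified Lean document; each statement's English description precedes it below -/
import Mathlib

section
/- The forward image of a Lagrangian subspace under a morphism of split-bilinear spaces is again Lagrangian. That is, if E ⊂ V⊕V* is Lagrangian and (Θ,ω): V⊕V* ⇢ V'⊕V'* is a morphism, then the forward image of E in V'⊕V'* is a Lagrangian subspace. -/
/-! Dirac structures on `V ⊕ V*` and strong Dirac morphisms.
STATEMENT 0: the composition of strong Dirac morphisms is a strong Dirac morphism. -/

/-- The canonical split symmetric pairing on `V ⊕ V*`. -/
def diracPair {V : Type*} [AddCommGroup V] [Module ℝ V]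
    (x y : V × Module.Dual ℝ V) : ℝ :=
  x.2 y.1 + y.2 x.1

/-- `E` is Lagrangian iff it coincides with its orthogonal w.r.t. the split pairing. -/
def IsLagrangian {V : Type*} [AddCommGroup V] [Module ℝ V]
    (E : Submodule ℝ (V × Module.Dual ℝ V)) : Prop :=
  ∀ x, (∀ y ∈ E, diracPair x y = 0) ↔ x ∈ E

/-- The relation on `V ⊕ V*` × `V' ⊕ V'*` defined by a morphism `(Θ, ω)`:
`(v,α) ∼ (v',α')` iff `v' = Θ v` and `α = ι_v ω + Θ* α'`. -/
def DiracRel {V V' : Type*} [AddCommGroup V] [Module ℝ V] [AddCommGroup V'] [Module ℝ V']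
    (Θ : V →ₗ[ℝ] V') (ω : V →ₗ[ℝ] Module.Dual ℝ V)
    (x : V × Module.Dual ℝ V) (x' : V' × Module.Dual ℝ V') : Prop :=
  x'.1 = Θ x.1 ∧ x.2 = ω x.1 + x'.2.comp Θ

/-- The forward image of a subspace `E` under the morphism `(Θ, ω)`. -/
def fwdImage {V V' : Type*} [AddCommGroup V] [Module ℝ V] [AddCommGroup V'] [Module ℝ V']
    (Θ : V →ₗ[ℝ] V') (ω : V →ₗ[ℝ] Module.Dual ℝ V)
    (E : Submodule ℝ (V × Module.Dual ℝ V)) : Set (V' × Module.Dual ℝ V') :=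
  {x' | ∃ x ∈ E, DiracRel Θ ω x x'}

/-- `(Θ, ω)` is a Dirac morphism `(𝕍, E) ⇢ (𝕍', E')`: `E'` is the forward image of `E`. -/
def IsDiracMorphism {V V' : Type*} [AddCommGroup V] [Module ℝ V] [AddCommGroup V'] [Module ℝ V']
    (Θ : V →ₗ[ℝ] V') (ω : V →ₗ[ℝ] Module.Dual ℝ V)
    (E : Submodule ℝ (V × Module.Dual ℝ V)) (E' : Submodule ℝ (V' × Module.Dual ℝ V')) : Prop :=
  (E' : Set (V' × Module.Dual ℝ V')) = fwdImage Θ ω E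

/-- Strong Dirac morphism: moreover `E ∩ ker(Θ,ω) = 0`. -/
def IsStrongDiracMorphism {V V' : Type*} [AddCommGroup V] [Module ℝ V]
    [AddCommGroup V'] [Module ℝ V']
    (Θ : V →ₗ[ℝ] V') (ω : V →ₗ[ℝ] Module.Dual ℝ V)
    (E : Submodule ℝ (V × Module.Dual ℝ V)) (E' : Submodule ℝ (V' × Module.Dual ℝ V')) : Prop :=
  IsDiracMorphism Θ ω E E' ∧ ∀ x ∈ E, DiracRel Θ ω x 0 → x = 0



/-- In vector spaces over a field, the annihilator of a preimage is contained in the image of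
the annihilator under the dual map. -/
lemma dualAnnihilator_comap_le {W U : Type*} [AddCommGroup W] [Module ℝ W]
    [AddCommGroup U] [Module ℝ U]
    (φ : W →ₗ[ℝ] U) (E : Submodule ℝ U) :
    (E.comap φ).dualAnnihilator ≤ E.dualAnnihilator.map φ.dualMap := by
  have h1 : E.comap φ = LinearMap.ker (E.mkQ.comp φ) := by
    rw [LinearMap.ker_comp, Submodule.ker_mkQ]
  rw [h1, ← LinearMap.range_dualMap_eq_dualAnnihilator_ker, ← LinearMap.dualMap_comp_dualMap,
    LinearMap.range_comp, LinearMap.range_dualMap_eq_dualAnnihilator_ker, Submodule.ker_mkQ]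

/-- The forward image of a Lagrangian subspace under a morphism of
split-bilinear spaces is again a Lagrangian subspace. -/
theorem forward_image_isLagrangian
    {V V' : Type*} [AddCommGroup V] [Module ℝ V] [FiniteDimensional ℝ V]
    [AddCommGroup V'] [Module ℝ V'] [FiniteDimensional ℝ V']
    (Θ : V →ₗ[ℝ] V') (ω : V →ₗ[ℝ] Module.Dual ℝ V) (hω : ∀ v, ω v v = 0)
    (E : Submodule ℝ (V × Module.Dual ℝ V)) (hE : IsLagrangian E) :
    ∃ E' : Submodule ℝ (V' × Module.Dual ℝ V'),
      (E' : Set (V' × Module.Dual ℝ V')) = fwdImage Θ ω E ∧ IsLagrangian E' := by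
    classical
  set φ : (V × Module.Dual ℝ V') →ₗ[ℝ] (V × Module.Dual ℝ V) :=
    (LinearMap.fst ℝ V (Module.Dual ℝ V')).prod
      (ω.comp (LinearMap.fst ℝ V (Module.Dual ℝ V')) +
        Θ.dualMap.comp (LinearMap.snd ℝ V (Module.Dual ℝ V'))) with hφdef
  set π : (V × Module.Dual ℝ V') →ₗ[ℝ] (V' × Module.Dual ℝ V') :=
    (Θ.comp (LinearMap.fst ℝ V (Module.Dual ℝ V'))).prod
      (LinearMap.snd ℝ V (Module.Dual ℝ V')) with hπdef
  have hφ_apply : ∀ z : V × Module.Dual ℝ V', φ z = (z.1, ω z.1 + z.2.comp Θ) := fun z => rfl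
  have hπ_apply : ∀ z : V × Module.Dual ℝ V', π z = (Θ z.1, z.2) := fun z => rfl
  have hskew : ∀ v w : V, ω v w = - ω w v := by
    intro v w
    have h := hω (v + w)
    simp only [map_add, LinearMap.add_apply, hω] at h
    linarith
  have hmem : ∀ x' : V' × Module.Dual ℝ V',
      x' ∈ (E.comap φ).map π ↔ ∃ v : V, (v, ω v + x'.2.comp Θ) ∈ E ∧ Θ v = x'.1 := by
    intro x'
    constructor
    · rintro ⟨⟨v, α₂⟩, hz, rfl⟩
      refine ⟨v, ?_, rfl⟩
      have h := Submodule.mem_comap.mp hz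
      rw [hφ_apply] at h
      exact h
    · rintro ⟨v, hv, hΘ⟩
      refine ⟨(v, x'.2), Submodule.mem_comap.mpr ?_, ?_⟩
      · rw [hφ_apply]; exact hv
      · rw [hπ_apply]; exact Prod.ext hΘ rfl
  have hiso : ∀ x' ∈ (E.comap φ).map π, ∀ y' ∈ (E.comap φ).map π, diracPair x' y' = 0 := by
    rintro _ ⟨⟨v, α'⟩, hv, rfl⟩ _ ⟨⟨w, β'⟩, hw, rfl⟩
    have h0 := (hE (φ (v, α'))).mpr (Submodule.mem_comap.mp hv) (φ (w, β'))
      (Submodule.mem_comap.mp hw)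
    rw [hφ_apply, hφ_apply] at h0
    rw [hπ_apply, hπ_apply]
    simp only [diracPair, LinearMap.add_apply, LinearMap.comp_apply] at h0 ⊢
    have hs := hskew v w
    linarith
  refine ⟨(E.comap φ).map π, ?_, ?_⟩
  · ext x'
    simp only [SetLike.mem_coe, fwdImage, Set.mem_setOf_eq]
    rw [hmem x']
    constructor
    · rintro ⟨v, hv, hΘ⟩
      exact ⟨(v, ω v + x'.2.comp Θ), hv, hΘ.symm, rfl⟩
    · rintro ⟨⟨v, β⟩, hx, h1, h2⟩
      exact ⟨v, by rw [← h2]; exact hx, h1.symm⟩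
  · intro x'
    constructor
    · intro H
      set L : (V × Module.Dual ℝ V') →ₗ[ℝ] ℝ :=
        (Θ.dualMap x'.2).comp (LinearMap.fst ℝ V (Module.Dual ℝ V')) +
          (Module.Dual.eval ℝ V' x'.1).comp (LinearMap.snd ℝ V (Module.Dual ℝ V')) with hLdef
      have hLapp : ∀ z : V × Module.Dual ℝ V', L z = x'.2 (Θ z.1) + z.2 x'.1 := fun z => rfl
      have hLmem : L ∈ (E.comap φ).dualAnnihilator := by
        rw [Submodule.mem_dualAnnihilator]
        intro z hz
        have h := H (π z) (Submodule.mem_map_of_mem hz)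
        rw [hπ_apply] at h
        rw [hLapp]
        simpa [diracPair] using h
      obtain ⟨M, hME, hMφ⟩ := dualAnnihilator_comap_le φ E hLmem
      set w : V := (Module.evalEquiv ℝ V).symm
        (M.comp (LinearMap.inr ℝ V (Module.Dual ℝ V))) with hwdef
      set β : Module.Dual ℝ V := M.comp (LinearMap.inl ℝ V (Module.Dual ℝ V)) with hβdef
      have hwev : Module.Dual.eval ℝ V w = M.comp (LinearMap.inr ℝ V (Module.Dual ℝ V)) := by
        rw [hwdef, ← Module.evalEquiv_apply]
        exact (Module.evalEquiv ℝ V).apply_symm_apply _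
      have hMapp : ∀ y : V × Module.Dual ℝ V, M y = β y.1 + y.2 w := by
        intro y
        have h2 : y.2 w = M (0, y.2) := by
          have h := LinearMap.congr_fun hwev y.2
          simpa [Module.Dual.eval_apply] using h
        have h1 : β y.1 = M (y.1, 0) := by simp [hβdef]
        have hy : ((y.1, (0 : Module.Dual ℝ V)) + ((0 : V), y.2)) = y := by simp
        rw [h1, h2, ← map_add, hy]
      have hx₀ : (w, β) ∈ E := by
        apply (hE (w, β)).mp
        intro y hy
        have h0 := (Submodule.mem_dualAnnihilator M).mp hME y hy
        rw [hMapp y] at h0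
        show β y.1 + y.2 w = 0
        exact h0
      have h1 : ∀ v : V, β v + ω v w = x'.2 (Θ v) := by
        intro v
        have h := LinearMap.congr_fun hMφ (v, 0)
        rw [LinearMap.dualMap_apply, hφ_apply, hMapp, hLapp] at h
        simpa using h
      have h2 : Θ w = x'.1 := by
        rw [← sub_eq_zero]
        rw [← Module.forall_dual_apply_eq_zero_iff ℝ (Θ w - x'.1)]
        intro α₂
        have h := LinearMap.congr_fun hMφ (0, α₂)
        rw [LinearMap.dualMap_apply, hφ_apply, hMapp, hLapp] at h
        simp only [map_zero, map_sub, LinearMap.add_apply, LinearMap.comp_apply,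
          LinearMap.zero_apply, zero_add, map_zero] at h ⊢
        linarith
      have hβ : β = ω w + x'.2.comp Θ := by
        ext v
        have hv := h1 v
        have hs := hskew v w
        simp only [LinearMap.add_apply, LinearMap.comp_apply]
        linarith
      rw [hmem]
      exact ⟨w, by rw [← hβ]; exact hx₀, h2⟩
    · intro hx' y' hy'
      exact hiso x' hx' y' hy'
end

section
/- For a Euclidean vector space V, the map A ↦ E_A = {((I−A⁻¹)v, (I+A⁻¹)v/2) : v ∈ V} is a bijection from the orthogonal group O(V) onto the set of Lagrangian subspaces of V⊕V* (identifying V* with V via the inner product). -/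
open RealInnerProductSpace

/-- The split symmetric pairing on `V ⊕ V* ≅ V ⊕ V`, where `V*` is identified
with `V` via the inner product. -/
def diracPairE {V : Type*} [NormedAddCommGroup V] [InnerProductSpace ℝ V]
    (x y : V × V) : ℝ :=
  ⟪x.2, y.1⟫ + ⟪y.2, x.1⟫

/-- A subspace of `V ⊕ V* ≅ V ⊕ V` is Lagrangian iff it coincides with its
orthogonal relative to the split pairing. -/
def IsLagrangianE {V : Type*} [NormedAddCommGroup V] [InnerProductSpace ℝ V]
    (E : Submodule ℝ (V × V)) : Prop :=
  ∀ x, (∀ y ∈ E, diracPairE x y = 0) ↔ x ∈ E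

/-- The Lagrangian subspace `E_A = {((I - A⁻¹)v, (I + A⁻¹)v/2) : v ∈ V}`
associated to an orthogonal transformation `A ∈ O(V)`. -/
noncomputable def lagrangianOf {V : Type*} [NormedAddCommGroup V] [InnerProductSpace ℝ V]
    (A : V ≃ₗᵢ[ℝ] V) : Submodule ℝ (V × V) :=
  LinearMap.range (LinearMap.prod
    (LinearMap.id - A.symm.toLinearEquiv.toLinearMap)
    ((2⁻¹ : ℝ) • (LinearMap.id + A.symm.toLinearEquiv.toLinearMap)))

section Aux

variable {V : Type*} [NormedAddCommGroup V] [InnerProductSpace ℝ V]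

/-- First diagonal coordinate `ε(x) = x₂ + x₁/2`. -/
noncomputable def epsL : V × V →ₗ[ℝ] V :=
  LinearMap.snd ℝ V V + (2⁻¹ : ℝ) • LinearMap.fst ℝ V V

/-- Second diagonal coordinate `φ(x) = x₂ - x₁/2`. -/
noncomputable def phiL : V × V →ₗ[ℝ] V :=
  LinearMap.snd ℝ V V - (2⁻¹ : ℝ) • LinearMap.fst ℝ V V

lemma epsL_apply (x : V × V) : epsL x = x.2 + (2⁻¹ : ℝ) • x.1 := rfl

lemma phiL_apply (x : V × V) : phiL x = x.2 - (2⁻¹ : ℝ) • x.1 := rfl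

lemma pair_eq (x y : V × V) :
    diracPairE x y = ⟪epsL x, epsL y⟫ - ⟪phiL x, phiL y⟫ := by
  simp only [diracPairE, epsL_apply, phiL_apply, inner_add_left, inner_add_right,
    inner_sub_left, inner_sub_right, real_inner_smul_left, real_inner_smul_right,
    real_inner_comm x.1 y.2]
  ring

lemma eps_phi_eq (x : V × V) :
    (epsL x - phiL x, (2⁻¹ : ℝ) • (epsL x + phiL x)) = x := by
  have h1 : epsL x - phiL x = x.1 := by
    rw [epsL_apply, phiL_apply]; module
  have h2 : (2⁻¹ : ℝ) • (epsL x + phiL x) = x.2 := by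
    rw [epsL_apply, phiL_apply]
    rw [show x.2 + (2⁻¹ : ℝ) • x.1 + (x.2 - (2⁻¹ : ℝ) • x.1) = (2:ℝ) • x.2 by module]
    rw [smul_smul]; norm_num
  rw [h1, h2]

lemma mem_lagrangianOf_iff (A : V ≃ₗᵢ[ℝ] V) (x : V × V) :
    x ∈ lagrangianOf A ↔ phiL x = A.symm (epsL x) := by
  constructor
  · rintro ⟨v, rfl⟩
    simp only [LinearMap.prod_apply, Function.prod, LinearMap.sub_apply, LinearMap.id_apply,
      LinearMap.smul_apply, LinearMap.add_apply, LinearEquiv.coe_coe,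
      LinearIsometryEquiv.coe_toLinearEquiv, epsL_apply, phiL_apply]
    rw [show (2⁻¹:ℝ) • (v + A.symm v) + (2⁻¹:ℝ) • (v - A.symm v) = (2⁻¹ + 2⁻¹ : ℝ) • v by module]
    rw [show (2⁻¹:ℝ) • (v + A.symm v) - (2⁻¹:ℝ) • (v - A.symm v)
        = (2⁻¹ + 2⁻¹ : ℝ) • A.symm v by module]
    norm_num
  · intro h
    refine ⟨epsL x, ?_⟩
    simp only [LinearMap.prod_apply, Function.prod, LinearMap.sub_apply, LinearMap.id_apply,
      LinearMap.smul_apply, LinearMap.add_apply, LinearEquiv.coe_coe,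
      LinearIsometryEquiv.coe_toLinearEquiv]
    rw [← h]
    exact eps_phi_eq x

lemma isLagrangianE_lagrangianOf (A : V ≃ₗᵢ[ℝ] V) : IsLagrangianE (lagrangianOf A) := by
  intro x
  constructor
  · intro h
    rw [mem_lagrangianOf_iff]
    have key : ∀ u : V, ⟪A.symm (epsL x) - phiL x, u⟫ = 0 := by
      intro u
      have hy : (A u - u, (2⁻¹ : ℝ) • (A u + u)) ∈ lagrangianOf A := by
        rw [mem_lagrangianOf_iff]
        simp only [epsL_apply, phiL_apply]
        rw [show (2⁻¹:ℝ) • (A u + u) + (2⁻¹:ℝ) • (A u - u) = (2⁻¹ + 2⁻¹ : ℝ) • A u by module]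
        rw [show (2⁻¹:ℝ) • (A u + u) - (2⁻¹:ℝ) • (A u - u) = (2⁻¹ + 2⁻¹ : ℝ) • u by module]
        norm_num
      have h0 := h _ hy
      rw [pair_eq] at h0
      have he : epsL ((A u - u, (2⁻¹ : ℝ) • (A u + u)) : V × V) = A u := by
        simp only [epsL_apply]
        rw [show (2⁻¹:ℝ) • (A u + u) + (2⁻¹:ℝ) • (A u - u) = (2⁻¹ + 2⁻¹ : ℝ) • A u by module]
        norm_num
      have hp : phiL ((A u - u, (2⁻¹ : ℝ) • (A u + u)) : V × V) = u := by
        simp only [phiL_apply]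
        rw [show (2⁻¹:ℝ) • (A u + u) - (2⁻¹:ℝ) • (A u - u) = (2⁻¹ + 2⁻¹ : ℝ) • u by module]
        norm_num
      rw [he, hp] at h0
      have : ⟪epsL x, A u⟫ = ⟪A.symm (epsL x), u⟫ := by
        conv_lhs => rw [← A.apply_symm_apply (epsL x)]
        exact A.inner_map_map _ _
      rw [inner_sub_left, ← this]
      linarith
    have hz := key (A.symm (epsL x) - phiL x)
    rw [inner_self_eq_zero, sub_eq_zero] at hz
    exact hz.symm
  · intro hx y hy
    rw [mem_lagrangianOf_iff] at hx hy
    rw [pair_eq, hx, hy, A.symm.inner_map_map, sub_self]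

end Aux

/-- `A ↦ E_A` is a bijection from `O(V)` onto the set of Lagrangian
subspaces of `V ⊕ V*`. -/
theorem orthogonal_group_bijection_lagrangian_grassmannian
    {V : Type*} [NormedAddCommGroup V] [InnerProductSpace ℝ V] [FiniteDimensional ℝ V] :
    (∀ A : V ≃ₗᵢ[ℝ] V, IsLagrangianE (lagrangianOf A)) ∧
    Function.Injective (fun A : V ≃ₗᵢ[ℝ] V => lagrangianOf A) ∧
    (∀ E : Submodule ℝ (V × V), IsLagrangianE E → ∃ A : V ≃ₗᵢ[ℝ] V, lagrangianOf A = E) := by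
  refine ⟨isLagrangianE_lagrangianOf, ?_, ?_⟩
  · -- injectivity
    intro A B hAB
    simp only at hAB
    have key : ∀ v : V, A.symm v = B.symm v := by
      intro v
      have hm : ((v - A.symm v, (2⁻¹ : ℝ) • (v + A.symm v)) : V × V) ∈ lagrangianOf A := by
        exact ⟨v, rfl⟩
      rw [hAB, mem_lagrangianOf_iff] at hm
      have he : epsL ((v - A.symm v, (2⁻¹ : ℝ) • (v + A.symm v)) : V × V) = v := by
        simp only [epsL_apply]
        rw [show (2⁻¹:ℝ) • (v + A.symm v) + (2⁻¹:ℝ) • (v - A.symm v) = (2⁻¹ + 2⁻¹ : ℝ) • v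
          by module]
        norm_num
      have hp : phiL ((v - A.symm v, (2⁻¹ : ℝ) • (v + A.symm v)) : V × V) = A.symm v := by
        simp only [phiL_apply]
        rw [show (2⁻¹:ℝ) • (v + A.symm v) - (2⁻¹:ℝ) • (v - A.symm v) = (2⁻¹ + 2⁻¹ : ℝ) • A.symm v
          by module]
        norm_num
      rw [he, hp] at hm
      exact hm
    ext u
    have := key (A u)
    rw [A.symm_apply_apply] at this
    conv_lhs => rw [← B.apply_symm_apply (A u), ← this]
  · -- surjectivity
    intro E hE
    -- isotropy within E
    have hiso : ∀ x ∈ E, ∀ y ∈ E, ⟪epsL x, epsL y⟫ = ⟪phiL x, phiL y⟫ := by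
      intro x hx y hy
      have := (hE x).mpr hx y hy
      rw [pair_eq] at this
      linarith
    -- epsL is surjective from E
    have hsurj : ∀ v : V, ∃ x, x ∈ E ∧ epsL x = v := by
      intro v
      have hW : (Submodule.map (epsL : V × V →ₗ[ℝ] V) E) = ⊤ := by
        rw [← Submodule.orthogonal_eq_bot_iff]
        rw [Submodule.eq_bot_iff]
        intro w hw
        have hmem : ((w, (2⁻¹ : ℝ) • w) : V × V) ∈ E := by
          apply (hE _).mp
          intro y hy
          rw [pair_eq]
          have he : epsL ((w, (2⁻¹ : ℝ) • w) : V × V) = w := by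
            simp only [epsL_apply]
            rw [show (2⁻¹:ℝ) • w + (2⁻¹:ℝ) • w = (2⁻¹ + 2⁻¹ : ℝ) • w by module]
            norm_num
          have hp : phiL ((w, (2⁻¹ : ℝ) • w) : V × V) = 0 := by
            simp only [phiL_apply, sub_self]
          rw [he, hp, inner_zero_left, sub_zero, real_inner_comm]
          exact hw _ (Submodule.mem_map_of_mem hy)
        have h0 := hiso _ hmem _ hmem
        have he : epsL ((w, (2⁻¹ : ℝ) • w) : V × V) = w := by
          simp only [epsL_apply]
          rw [show (2⁻¹:ℝ) • w + (2⁻¹:ℝ) • w = (2⁻¹ + 2⁻¹ : ℝ) • w by module]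
          norm_num
        have hp : phiL ((w, (2⁻¹ : ℝ) • w) : V × V) = 0 := by
          simp only [phiL_apply, sub_self]
        rw [he, hp, inner_zero_left] at h0
        exact inner_self_eq_zero.mp h0
      have : v ∈ Submodule.map (epsL : V × V →ₗ[ℝ] V) E := hW ▸ Submodule.mem_top
      obtain ⟨x, hx, hex⟩ := this
      exact ⟨x, hx, hex⟩
    -- phiL is surjective from E
    have hsurj' : ∀ v : V, ∃ x, x ∈ E ∧ phiL x = v := by
      intro v
      have hW : (Submodule.map (phiL : V × V →ₗ[ℝ] V) E) = ⊤ := by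
        rw [← Submodule.orthogonal_eq_bot_iff]
        rw [Submodule.eq_bot_iff]
        intro w hw
        have hmem : ((-w, (2⁻¹ : ℝ) • w) : V × V) ∈ E := by
          apply (hE _).mp
          intro y hy
          rw [pair_eq]
          have he : epsL ((-w, (2⁻¹ : ℝ) • w) : V × V) = 0 := by
            simp only [epsL_apply, smul_neg]
            abel
          have hp : phiL ((-w, (2⁻¹ : ℝ) • w) : V × V) = w := by
            simp only [phiL_apply, smul_neg, sub_neg_eq_add]
            rw [show (2⁻¹:ℝ) • w + (2⁻¹:ℝ) • w = (2⁻¹ + 2⁻¹ : ℝ) • w by module]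
            norm_num
          rw [he, hp, inner_zero_left, zero_sub, neg_eq_zero, real_inner_comm]
          exact hw _ (Submodule.mem_map_of_mem hy)
        have h0 := hiso _ hmem _ hmem
        have he : epsL ((-w, (2⁻¹ : ℝ) • w) : V × V) = 0 := by
          simp only [epsL_apply, smul_neg]
          abel
        have hp : phiL ((-w, (2⁻¹ : ℝ) • w) : V × V) = w := by
          simp only [phiL_apply, smul_neg, sub_neg_eq_add]
          rw [show (2⁻¹:ℝ) • w + (2⁻¹:ℝ) • w = (2⁻¹ + 2⁻¹ : ℝ) • w by module]
          norm_num
        rw [he, hp, inner_zero_left] at h0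
        exact inner_self_eq_zero.mp h0.symm
      have : v ∈ Submodule.map (phiL : V × V →ₗ[ℝ] V) E := hW ▸ Submodule.mem_top
      obtain ⟨x, hx, hex⟩ := this
      exact ⟨x, hx, hex⟩
    -- uniqueness of the phi-coordinate given the eps-coordinate
    have huniq : ∀ x ∈ E, ∀ y ∈ E, epsL x = epsL y → phiL x = phiL y := by
      intro x hx y hy hexy
      have hxy : x - y ∈ E := Submodule.sub_mem E hx hy
      have h0 := hiso _ hxy _ hxy
      rw [map_sub, map_sub, hexy, sub_self, inner_zero_left] at h0
      exact sub_eq_zero.mp (inner_self_eq_zero.mp h0.symm)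
    -- define the map g
    let g : V → V := fun v => phiL (Classical.choose (hsurj v))
    have hgmem : ∀ v : V, Classical.choose (hsurj v) ∈ E ∧ epsL (Classical.choose (hsurj v)) = v :=
      fun v => Classical.choose_spec (hsurj v)
    have hgspec : ∀ x ∈ E, phiL x = g (epsL x) := by
      intro x hx
      exact huniq _ hx _ (hgmem (epsL x)).1 (hgmem (epsL x)).2.symm
    have hmemg : ∀ x : V × V, x ∈ E ↔ phiL x = g (epsL x) := by
      intro x
      refine ⟨hgspec x, fun h => ?_⟩
      have hc := hgmem (epsL x)
      have : x = Classical.choose (hsurj (epsL x)) := by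
        have h1 : epsL x = epsL (Classical.choose (hsurj (epsL x))) := hc.2.symm
        have h2 : phiL x = phiL (Classical.choose (hsurj (epsL x))) := h
        have h3 := eps_phi_eq (Classical.choose (hsurj (epsL x)))
        rw [← h1, ← h2, eps_phi_eq x] at h3
        exact h3
      rw [this]; exact hc.1
    -- g is linear
    have hadd : ∀ v w : V, g (v + w) = g v + g w := by
      intro v w
      have h1 := (hgmem v).1
      have h2 := (hgmem w).1
      have hsum : Classical.choose (hsurj v) + Classical.choose (hsurj w) ∈ E :=
        Submodule.add_mem E h1 h2
      have := hgspec _ hsum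
      rw [map_add, map_add, (hgmem v).2, (hgmem w).2] at this
      exact this.symm
    have hsmul : ∀ (c : ℝ) (v : V), g (c • v) = c • g v := by
      intro c v
      have h1 := (hgmem v).1
      have hs : c • Classical.choose (hsurj v) ∈ E := Submodule.smul_mem E c h1
      have := hgspec _ hs
      rw [map_smul, map_smul, (hgmem v).2] at this
      exact this.symm
    let glin : V →ₗ[ℝ] V :=
      { toFun := g, map_add' := hadd, map_smul' := hsmul }
    have hinner : ∀ v w : V, ⟪g v, g w⟫ = ⟪v, w⟫ := by
      intro v w
      have := hiso _ (hgmem v).1 _ (hgmem w).1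
      rw [(hgmem v).2, (hgmem w).2] at this
      exact this.symm
    have hnorm : ∀ v : V, ‖g v‖ = ‖v‖ := by
      intro v
      have h1 : ⟪g v, g v⟫ = ⟪v, v⟫ := hinner v v
      rw [real_inner_self_eq_norm_sq, real_inner_self_eq_norm_sq] at h1
      nlinarith [h1, norm_nonneg (g v), norm_nonneg v]
    let giso : V →ₗᵢ[ℝ] V := ⟨glin, hnorm⟩
    have hgsurj : Function.Surjective giso := by
      intro f
      obtain ⟨x, hx, hfx⟩ := hsurj' f
      exact ⟨epsL x, by rw [← hfx]; exact (hgspec x hx).symm⟩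
    let G : V ≃ₗᵢ[ℝ] V := LinearIsometryEquiv.ofSurjective giso hgsurj
    have hG : ∀ v : V, G v = g v := fun v => rfl
    refine ⟨G.symm, ?_⟩
    ext x
    rw [mem_lagrangianOf_iff, hmemg x, LinearIsometryEquiv.symm_symm, hG]
end

section
/- For A₁, A₂ ∈ O(V), the intersection of the Lagrangian subspaces E_{A₁} ∩ E_{A₂} is isomorphic to ker(A₁ − A₂); in particular E_{A₁} and E_{A₂} are transverse if and only if A₁ − A₂ is invertible. -/
open RealInnerProductSpace

section Aux

variable {V : Type*} [NormedAddCommGroup V] [InnerProductSpace ℝ V]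

noncomputable def lagMap (A : V ≃ₗᵢ[ℝ] V) : V →ₗ[ℝ] V × V :=
  LinearMap.prod
    (LinearMap.id - A.symm.toLinearEquiv.toLinearMap)
    ((2⁻¹ : ℝ) • (LinearMap.id + A.symm.toLinearEquiv.toLinearMap))

lemma lagMap_apply (A : V ≃ₗᵢ[ℝ] V) (v : V) :
    lagMap A v = (v - A.symm v, (2⁻¹ : ℝ) • (v + A.symm v)) := rfl

lemma lagrangianOf_eq (A : V ≃ₗᵢ[ℝ] V) : lagrangianOf A = LinearMap.range (lagMap A) := rfl

lemma lagMap_eq_iff (A₁ A₂ : V ≃ₗᵢ[ℝ] V) (v w : V) :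
    lagMap A₁ v = lagMap A₂ w ↔ v = w ∧ A₁.symm v = A₂.symm w := by
  rw [lagMap_apply, lagMap_apply, Prod.ext_iff]
  dsimp only
  constructor
  · rintro ⟨h1, h2⟩
    have h2' : v + A₁.symm v = w + A₂.symm w := by
      have := congrArg (fun x => (2 : ℝ) • x) h2
      simpa [smul_smul] using this
    have hv2 : (2 : ℝ) • v = (2 : ℝ) • w := by
      rw [two_smul, two_smul]
      calc v + v = (v - A₁.symm v) + (v + A₁.symm v) := by abel
        _ = (w - A₂.symm w) + (w + A₂.symm w) := by rw [h1, h2']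
        _ = w + w := by abel
    have hv : v = w := smul_right_injective V (two_ne_zero) hv2
    refine ⟨hv, ?_⟩
    subst hv
    exact sub_right_inj.mp h1
  · rintro ⟨h1, h2⟩
    subst h1
    rw [h2]
    exact ⟨rfl, rfl⟩

lemma lagMap_injective (A : V ≃ₗᵢ[ℝ] V) : Function.Injective (lagMap A) := by
  intro v w h
  exact ((lagMap_eq_iff A A v w).mp h).1

lemma inf_eq_map (A₁ A₂ : V ≃ₗᵢ[ℝ] V) :
    lagrangianOf A₁ ⊓ lagrangianOf A₂ =
      Submodule.map (lagMap A₁)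
        (LinearMap.ker (A₁.symm.toLinearEquiv.toLinearMap - A₂.symm.toLinearEquiv.toLinearMap)) := by
  ext x
  simp only [Submodule.mem_inf, lagrangianOf_eq, LinearMap.mem_range, Submodule.mem_map,
    LinearMap.mem_ker, LinearMap.sub_apply]
  constructor
  · rintro ⟨⟨v, hv⟩, ⟨w, hw⟩⟩
    obtain ⟨hvw, h2⟩ := (lagMap_eq_iff A₁ A₂ v w).mp (hv.trans hw.symm)
    subst hvw
    exact ⟨v, sub_eq_zero_of_eq h2, hv⟩
  · rintro ⟨v, hv, rfl⟩
    have h2 : A₁.symm v = A₂.symm v := eq_of_sub_eq_zero hv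
    exact ⟨⟨v, rfl⟩, ⟨v, ((lagMap_eq_iff A₂ A₁ v v).mpr ⟨rfl, h2.symm⟩)⟩⟩

lemma ker_symm_eq_map (A₁ A₂ : V ≃ₗᵢ[ℝ] V) :
    LinearMap.ker (A₁.symm.toLinearEquiv.toLinearMap - A₂.symm.toLinearEquiv.toLinearMap) =
      Submodule.map A₁.toLinearEquiv.toLinearMap
        (LinearMap.ker (A₁.toLinearEquiv.toLinearMap - A₂.toLinearEquiv.toLinearMap)) := by
  ext v
  simp only [LinearMap.mem_ker, Submodule.mem_map, LinearMap.sub_apply]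
  constructor
  · intro h
    have h2 : A₁.symm v = A₂.symm v := eq_of_sub_eq_zero h
    refine ⟨A₁.symm v, ?_, A₁.apply_symm_apply v⟩
    show A₁ (A₁.symm v) - A₂ (A₁.symm v) = 0
    rw [A₁.apply_symm_apply, h2, A₂.apply_symm_apply, sub_self]
  · rintro ⟨w, hw, rfl⟩
    have h2 : A₁ w = A₂ w := eq_of_sub_eq_zero hw
    show A₁.symm (A₁ w) - A₂.symm (A₁ w) = 0
    rw [A₁.symm_apply_apply, h2, A₂.symm_apply_apply, sub_self]

lemma map_eq_bot_iff_inj {M N : Type*} [AddCommGroup M] [AddCommGroup N] [Module ℝ M]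
    [Module ℝ N] (f : M →ₗ[ℝ] N) (hf : Function.Injective f) (p : Submodule ℝ M) :
    Submodule.map f p = ⊥ ↔ p = ⊥ := by
  constructor
  · intro h
    rw [Submodule.eq_bot_iff] at h ⊢
    intro x hx
    have := h (f x) ⟨x, hx, rfl⟩
    exact hf (by simpa using this)
  · rintro rfl
    exact Submodule.map_bot f

end Aux

/-- `E_{A₁} ∩ E_{A₂} ≅ ker(A₁ - A₂)`; in particular the Lagrangians
`E_{A₁}` and `E_{A₂}` are transverse iff `A₁ - A₂` is invertible. -/
theorem lagrangian_intersection_iso_ker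
    {V : Type*} [NormedAddCommGroup V] [InnerProductSpace ℝ V] [FiniteDimensional ℝ V]
    (A₁ A₂ : V ≃ₗᵢ[ℝ] V) :
    Nonempty (↥(lagrangianOf A₁ ⊓ lagrangianOf A₂) ≃ₗ[ℝ]
        ↥(LinearMap.ker (A₁.toLinearEquiv.toLinearMap - A₂.toLinearEquiv.toLinearMap))) ∧
    ((lagrangianOf A₁ ⊓ lagrangianOf A₂ = ⊥) ↔
        Function.Bijective (A₁.toLinearEquiv.toLinearMap - A₂.toLinearEquiv.toLinearMap)) := by
  have hA₁inj : Function.Injective A₁.toLinearEquiv.toLinearMap := A₁.injective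
  refine ⟨⟨?_⟩, ?_⟩
  · exact (LinearEquiv.ofEq _ _ (inf_eq_map A₁ A₂)).trans
      (((Submodule.equivMapOfInjective _ (lagMap_injective A₁) _).symm).trans
        (((LinearEquiv.ofEq _ _ (ker_symm_eq_map A₁ A₂)).trans
          (Submodule.equivMapOfInjective _ hA₁inj _).symm)))
  · rw [inf_eq_map A₁ A₂, map_eq_bot_iff_inj _ (lagMap_injective A₁),
      ker_symm_eq_map A₁ A₂, map_eq_bot_iff_inj _ hA₁inj, LinearMap.ker_eq_bot]
    constructor
    · intro h
      exact ⟨h, (LinearMap.injective_iff_surjective).mp h⟩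
    · exact fun h => h.1
end

section
/- For A ∈ O(V), the dimension of E_A ∩ V equals the dimension of ker(A + I); consequently dim(E_A ∩ V) is even if and only if det(A) = 1. -/
open RealInnerProductSpace

section Aux

variable {W : Type*} [NormedAddCommGroup W] [InnerProductSpace ℝ W] [FiniteDimensional ℝ W]

/-- The determinant of the adjoint equals the determinant (real scalars). -/
lemma aux_det_adjoint (T : W →ₗ[ℝ] W) :
    LinearMap.det (LinearMap.adjoint T) = LinearMap.det T := by
  let v := stdOrthonormalBasis ℝ W
  rw [← LinearMap.det_toMatrix v.toBasis, ← LinearMap.det_toMatrix v.toBasis T,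
    LinearMap.toMatrix_adjoint v v, Matrix.det_conjTranspose, star_trivial]

/-- An orthogonal endomorphism without eigenvalue `-1` has determinant `1`. -/
lemma aux_det_eq_one (T : W →ₗ[ℝ] W) (hT : ∀ x y : W, ⟪T x, T y⟫ = ⟪x, y⟫)
    (hker : LinearMap.ker (T + 1) = ⊥) : LinearMap.det T = 1 := by
  have hadj : (LinearMap.adjoint T) * T = 1 := by
    ext x
    refine ext_inner_left ℝ fun y => ?_
    simp only [Module.End.mul_apply, LinearMap.adjoint_inner_right, Module.End.one_apply]
    exact hT y x
  have hone : LinearMap.adjoint (1 : W →ₗ[ℝ] W) = 1 := by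
    rw [← LinearMap.star_eq_adjoint, star_one]
  have h1 : (LinearMap.adjoint T) * (T + 1) = LinearMap.adjoint (T + 1) := by
    rw [mul_add, mul_one, hadj, map_add, hone, add_comm]
  have hdet : LinearMap.det (T + 1) ≠ 0 := by
    intro h0
    have := LinearMap.bot_lt_ker_of_det_eq_zero h0
    rw [hker] at this
    exact lt_irrefl _ this
  have h2 : LinearMap.det (LinearMap.adjoint T) * LinearMap.det (T + 1)
      = LinearMap.det (T + 1) := by
    rw [← LinearMap.det_comp, ← Module.End.mul_eq_comp, h1, aux_det_adjoint]
  have h3 : LinearMap.det (LinearMap.adjoint T) = 1 :=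
    mul_right_cancel₀ hdet (h2.trans (one_mul _).symm)
  rw [← aux_det_adjoint, h3]

/-- For an orthogonal transformation, the determinant is `(-1)` to the dimension of the
`-1`-eigenspace. -/
lemma aux_det_eq_pow (A : W ≃ₗᵢ[ℝ] W) :
    LinearMap.det A.toLinearEquiv.toLinearMap
      = (-1 : ℝ) ^ Module.finrank ℝ
          ↥(LinearMap.ker (A.toLinearEquiv.toLinearMap + LinearMap.id)) := by
  classical
  set T : W →ₗ[ℝ] W := A.toLinearEquiv.toLinearMap with hTdef
  set K : Submodule ℝ W := LinearMap.ker (T + LinearMap.id) with hKdef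
  have hmem : ∀ x, x ∈ K ↔ T x = -x := by
    intro x
    simp only [hKdef, LinearMap.mem_ker, LinearMap.add_apply, LinearMap.id_apply]
    constructor
    · intro h; exact eq_neg_of_add_eq_zero_left h
    · intro h; rw [h]; abel
  have hK : ∀ x ∈ K, T x ∈ K := by
    intro x hx
    rw [hmem] at hx ⊢
    rw [hx, map_neg, hx, neg_neg]
  have hinner : ∀ x y : W, ⟪T x, T y⟫ = ⟪x, y⟫ := by
    intro x y
    exact A.inner_map_map x y
  have hKp : ∀ x ∈ Kᗮ, T x ∈ Kᗮ := by
    intro x hx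
    intro v hv
    have hv' : T v = -v := (hmem v).mp hv
    have : ⟪T v, T x⟫ = ⟪v, x⟫ := hinner v x
    rw [hv'] at this
    have h0 : ⟪v, x⟫ = 0 := hx v hv
    rw [inner_neg_left] at this
    -- this : -⟪v, T x⟫ = ⟪v, x⟫
    rw [h0] at this
    linarith
  set F : K →ₗ[ℝ] K := T.restrict hK with hFdef
  set G : ↥Kᗮ →ₗ[ℝ] ↥Kᗮ := T.restrict hKp with hGdef
  have hcompl : IsCompl K Kᗮ := K.isCompl_orthogonal
  let e := K.prodEquivOfIsCompl Kᗮ hcompl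
  let bK := Module.finBasis ℝ K
  let bKp := Module.finBasis ℝ ↥Kᗮ
  let b := bK.prod bKp
  have key : ∀ p : ↥K × ↥Kᗮ, (e ((F.prodMap G) p) : W) = T (e p) := by
    rintro ⟨a, b⟩
    have he : ∀ (a : ↥K) (b : ↥Kᗮ), (e (a, b) : W) = ↑a + ↑b := fun a b =>
      Submodule.coe_prodEquivOfIsCompl' _ _ _ _
    simp only [LinearMap.prodMap_apply, he, map_add]
    rw [LinearMap.restrict_coe_apply, LinearMap.restrict_coe_apply]
  have hψ : (e : (↥K × ↥Kᗮ) →ₗ[ℝ] W) ∘ₗ (F.prodMap G) ∘ₗ (e.symm : W →ₗ[ℝ] (↥K × ↥Kᗮ)) = T := by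
    ext x
    simp only [LinearMap.comp_apply, LinearEquiv.coe_coe]
    rw [key, e.apply_symm_apply]
  have hdetT : LinearMap.det T = LinearMap.det F * LinearMap.det G := by
    rw [← hψ, LinearMap.det_conj, ← LinearMap.det_toMatrix b, LinearMap.toMatrix_prodMap bK bKp F G,
      Matrix.det_fromBlocks_zero₂₁, LinearMap.det_toMatrix, LinearMap.det_toMatrix]
  have hF : F = (-1 : ℝ) • LinearMap.id := by
    ext x
    have hx : T x.1 = -x.1 := (hmem x.1).mp x.2
    show ((T.restrict hK) x : W) = _
    rw [LinearMap.restrict_coe_apply, hx]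
    simp
  have hdetF : LinearMap.det F = (-1 : ℝ) ^ Module.finrank ℝ K := by
    rw [hF, LinearMap.det_smul, LinearMap.det_id, mul_one]
  have hdetG : LinearMap.det G = 1 := by
    apply aux_det_eq_one
    · intro x y
      have : ⟪T x.1, T y.1⟫ = ⟪x.1, y.1⟫ := hinner x.1 y.1
      simpa [hGdef, Submodule.coe_inner, LinearMap.restrict_coe_apply] using this
    · rw [LinearMap.ker_eq_bot']
      intro m hm
      have h1 : T m.1 + m.1 = 0 := by
        have := congrArg (Subtype.val) hm
        simpa [hGdef, LinearMap.restrict_coe_apply] using this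
      have hmK : (m : W) ∈ K := by
        rw [hmem]
        exact eq_neg_of_add_eq_zero_left h1
      have : (m : W) ∈ K ⊓ Kᗮ := ⟨hmK, m.2⟩
      rw [hcompl.inf_eq_bot] at this
      apply Subtype.ext
      simpa using this
  rw [hdetT, hdetF, hdetG, mul_one]

end Aux

/-- `dim(E_A ∩ V) = dim ker(A + I)`, and this is even iff `det A = 1`.
Here `V ⊂ V ⊕ V* ≅ V ⊕ V` is embedded as `V ⊕ 0 = ⊤.prod ⊥`. -/
theorem lagrangian_parity_det
    {V : Type*} [NormedAddCommGroup V] [InnerProductSpace ℝ V] [FiniteDimensional ℝ V]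
    (A : V ≃ₗᵢ[ℝ] V) :
    Module.finrank ℝ ↥(lagrangianOf A ⊓ (⊤ : Submodule ℝ V).prod (⊥ : Submodule ℝ V))
        = Module.finrank ℝ ↥(LinearMap.ker (A.toLinearEquiv.toLinearMap + LinearMap.id)) ∧
    (Even (Module.finrank ℝ
          ↥(lagrangianOf A ⊓ (⊤ : Submodule ℝ V).prod (⊥ : Submodule ℝ V)))
        ↔ LinearMap.det A.toLinearEquiv.toLinearMap = 1) := by
  classical
  set T : V →ₗ[ℝ] V := A.toLinearEquiv.toLinearMap with hTdef
  set K : Submodule ℝ V := LinearMap.ker (T + LinearMap.id) with hKdef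
  have hmem : ∀ x, x ∈ K ↔ T x = -x := by
    intro x
    simp only [hKdef, LinearMap.mem_ker, LinearMap.add_apply, LinearMap.id_apply]
    constructor
    · intro h; exact eq_neg_of_add_eq_zero_left h
    · intro h; rw [h]; abel
  have hsymm_mem : ∀ x, x ∈ K ↔ A.symm x = -x := by
    intro x
    rw [hmem]
    constructor
    · intro h
      have h1 : A.symm (A x) = A.symm (-x) := by
        rw [show A x = T x from rfl, h]
      rw [A.symm_apply_apply, map_neg] at h1
      exact neg_eq_iff_eq_neg.mp h1.symm
    · intro h
      have h1 : A (A.symm x) = A (-x) := by rw [h]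
      rw [A.apply_symm_apply, map_neg] at h1
      show A x = -x
      exact neg_eq_iff_eq_neg.mp h1.symm
  -- The intersection equals K × ⊥
  have hint : lagrangianOf A ⊓ (⊤ : Submodule ℝ V).prod (⊥ : Submodule ℝ V)
      = K.prod (⊥ : Submodule ℝ V) := by
    ext ⟨x, y⟩
    simp only [Submodule.mem_inf, Submodule.mem_prod, Submodule.mem_top, Submodule.mem_bot,
      true_and, lagrangianOf, LinearMap.mem_range, LinearMap.prod_apply, Function.prod,
      LinearMap.sub_apply, LinearMap.smul_apply, LinearMap.add_apply, LinearMap.id_apply,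
      Prod.mk.injEq]
    constructor
    · rintro ⟨⟨v, hv1, hv2⟩, hy⟩
      subst hy
      refine ⟨?_, rfl⟩
      have h2 : v + A.symm v = 0 := by
        have := hv2
        have h2' : (2⁻¹ : ℝ) • (v + A.symm.toLinearEquiv.toLinearMap v) = 0 := hv2
        have := congrArg (fun z => (2 : ℝ) • z) h2'
        simpa [smul_smul] using this
      have hAv : A.symm v = -v := eq_neg_of_add_eq_zero_right h2
      have hvK : v ∈ K := (hsymm_mem v).mpr hAv
      have hx : x = v - A.symm.toLinearEquiv.toLinearMap v := hv1.symm
      have hx2 : x = (2 : ℝ) • v := by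
        rw [hx, show A.symm.toLinearEquiv.toLinearMap v = A.symm v from rfl, hAv,
          sub_neg_eq_add, two_smul]
      rw [hx2]
      exact K.smul_mem _ hvK
    · rintro ⟨hx, hy⟩
      subst hy
      refine ⟨⟨(2⁻¹ : ℝ) • x, ?_, ?_⟩, rfl⟩
      · have hAx : A.symm x = -x := (hsymm_mem x).mp hx
        have : A.symm.toLinearEquiv.toLinearMap ((2⁻¹ : ℝ) • x) = (2⁻¹ : ℝ) • A.symm x := by
          simp
        rw [this, hAx, smul_neg]
        rw [sub_neg_eq_add, ← two_smul ℝ, smul_smul]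
        norm_num
      · have hAx : A.symm x = -x := (hsymm_mem x).mp hx
        have : A.symm.toLinearEquiv.toLinearMap ((2⁻¹ : ℝ) • x) = (2⁻¹ : ℝ) • A.symm x := by
          simp
        rw [this, hAx, smul_neg, add_neg_cancel, smul_zero]
  have hrank : Module.finrank ℝ
      ↥(lagrangianOf A ⊓ (⊤ : Submodule ℝ V).prod (⊥ : Submodule ℝ V))
      = Module.finrank ℝ K := by
    rw [hint, ← Submodule.map_inl]
    exact (K.equivMapOfInjective _ LinearMap.inl_injective).symm.finrank_eq
  refine ⟨hrank, ?_⟩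
  rw [hrank]
  have hdet := aux_det_eq_pow A
  rw [← hTdef, ← hKdef] at hdet
  rw [hdet]
  rw [neg_one_pow_eq_one_iff_even (by norm_num : (-1 : ℝ) ≠ 1)]
end

section
/- Strong Dirac morphisms preserve parity: if (Θ,ω): (𝕍,E) ⇢ (𝕍',E') is a strong Dirac morphism of linear Dirac structures, then dim(E ∩ V) ≡ dim(E' ∩ V') mod 2. -/
universe u

/-- An alternating bilinear form on a finite-dimensional real space has even rank:
the kernel has the same parity of dimension as the whole space. -/
theorem altKerParity : ∀ (n : ℕ) (E : Type u) [AddCommGroup E] [Module ℝ E]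
    [FiniteDimensional ℝ E] (B : E →ₗ[ℝ] E →ₗ[ℝ] ℝ), (∀ e, B e e = 0) →
    Module.finrank ℝ E ≤ n →
    Module.finrank ℝ (LinearMap.ker B) % 2 = Module.finrank ℝ E % 2 := by
  intro n
  induction n with
  | zero =>
    intro E _ _ _ B halt hle
    have h1 : Module.finrank ℝ (LinearMap.ker B) ≤ Module.finrank ℝ E :=
      Submodule.finrank_le _
    omega
  | succ n ih =>
    intro E _ _ _ B halt hle
    have hskew : ∀ e f : E, B f e = - B e f := by
      intro e f
      have h := halt (e + f)
      simp only [map_add, LinearMap.add_apply] at h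
      rw [halt e, halt f] at h
      linarith
    by_cases hB : ∀ e f : E, B e f = 0
    · have hker : LinearMap.ker B = ⊤ := by
        ext x
        simp only [LinearMap.mem_ker, Submodule.mem_top, iff_true]
        ext y
        simp [hB]
      rw [hker, finrank_top]
    · push_neg at hB
      obtain ⟨e, f, hef⟩ := hB
      have hfe : B f e ≠ 0 := by rw [hskew]; simpa
      have he0 : e ≠ 0 := by rintro rfl; simp at hef
      have hf0 : f ≠ 0 := by rintro rfl; simp at hef
      set W : Submodule ℝ E := LinearMap.ker (B e) ⊓ LinearMap.ker (B f) with hW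
      set S : Submodule ℝ E := Submodule.span ℝ {e, f} with hS
      have heS : e ∈ S := Submodule.subset_span (by simp)
      have hfS : f ∈ S := Submodule.subset_span (by simp)
      -- W ⊔ S = ⊤
      have hsup : W ⊔ S = ⊤ := by
        rw [eq_top_iff]
        intro x _
        have hx : x = (x - (B e x / B e f) • f - (B f x / B f e) • e)
            + ((B e x / B e f) • f + (B f x / B f e) • e) := by abel
        rw [hx]
        apply Submodule.add_mem_sup
        · refine Submodule.mem_inf.mpr ⟨?_, ?_⟩
          · simp only [LinearMap.mem_ker, map_sub, map_smul, smul_eq_mul]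
            rw [halt e]
            field_simp
            ring
          · simp only [LinearMap.mem_ker, map_sub, map_smul, smul_eq_mul]
            rw [halt f]
            field_simp
            ring
        · exact Submodule.add_mem _ (Submodule.smul_mem _ _ hfS) (Submodule.smul_mem _ _ heS)
      -- W ⊓ S = ⊥
      have hinf : W ⊓ S = ⊥ := by
        rw [eq_bot_iff]
        intro x hx
        obtain ⟨hxW, hxS⟩ := Submodule.mem_inf.mp hx
        obtain ⟨hxe, hxf⟩ := Submodule.mem_inf.mp hxW
        obtain ⟨a, b, rfl⟩ := Submodule.mem_span_pair.mp hxS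
        simp only [LinearMap.mem_ker, map_add, map_smul, smul_eq_mul] at hxe hxf
        rw [halt e] at hxe
        rw [halt f] at hxf
        have hb : b = 0 := by
          have : b * B e f = 0 := by linarith
          exact (mul_eq_zero.mp this).resolve_right hef
        have ha : a = 0 := by
          have h' : a * B f e = 0 := by linarith
          exact (mul_eq_zero.mp h').resolve_right hfe
        simp [ha, hb]
      -- finrank S = 2
      have hS2 : Module.finrank ℝ S = 2 := by
        have hsp : S = (ℝ ∙ e) ⊔ (ℝ ∙ f) := by
          rw [hS, ← Submodule.span_union, Set.singleton_union]
        have hspinf : (ℝ ∙ e) ⊓ (ℝ ∙ f) = ⊥ := by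
          rw [eq_bot_iff]
          rintro x ⟨hxe, hxf⟩
          obtain ⟨a, rfl⟩ := Submodule.mem_span_singleton.mp hxe
          obtain ⟨b, hb⟩ := Submodule.mem_span_singleton.mp hxf
          have : B (a • e) f = 0 := by
            rw [← hb]
            simp only [map_smul, LinearMap.smul_apply, smul_eq_mul]
            rw [halt f]; ring
          simp only [map_smul, LinearMap.smul_apply, smul_eq_mul] at this
          have ha : a = 0 := (mul_eq_zero.mp this).resolve_right hef
          simp [ha]
        have := Submodule.finrank_sup_add_finrank_inf_eq (ℝ ∙ e) (ℝ ∙ f)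
        rw [hspinf, finrank_bot, finrank_span_singleton he0, finrank_span_singleton hf0] at this
        rw [hsp]
        omega
      have hdim : Module.finrank ℝ W + 2 = Module.finrank ℝ E := by
        have := Submodule.finrank_sup_add_finrank_inf_eq W S
        rw [hsup, hinf, finrank_bot, hS2, finrank_top] at this
        omega
      -- restrict B to W
      set B' : W →ₗ[ℝ] W →ₗ[ℝ] ℝ := B.domRestrict₁₂ W W with hB'
      have halt' : ∀ w : W, B' w w = 0 := fun w => halt w
      have hkerle : LinearMap.ker B ≤ W := by
        intro k hk
        rw [LinearMap.mem_ker] at hk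
        refine Submodule.mem_inf.mpr ⟨?_, ?_⟩
        · rw [LinearMap.mem_ker, hskew, hk]; simp
        · rw [LinearMap.mem_ker, hskew, hk]; simp
      have hker' : LinearMap.ker B' = (LinearMap.ker B).comap W.subtype := by
        ext w
        simp only [LinearMap.mem_ker, Submodule.mem_comap, Submodule.coe_subtype]
        constructor
        · intro hw
          ext x
          have hxmem : x ∈ W ⊔ S := hsup ▸ Submodule.mem_top
          obtain ⟨y, hy, s, hs, rfl⟩ := Submodule.mem_sup.mp hxmem
          obtain ⟨a, b, rfl⟩ := Submodule.mem_span_pair.mp hs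
          have h1 : B (w : E) y = 0 := by
            have := congrArg (fun g => g ⟨y, hy⟩) hw
            simpa [hB', LinearMap.domRestrict₁₂_apply] using this
          have h2 : B (w : E) e = 0 := by
            rw [hskew]
            have : (w : E) ∈ LinearMap.ker (B e) := w.2.1
            rw [LinearMap.mem_ker] at this
            rw [this]; ring
          have h3 : B (w : E) f = 0 := by
            rw [hskew]
            have : (w : E) ∈ LinearMap.ker (B f) := w.2.2
            rw [LinearMap.mem_ker] at this
            rw [this]; ring
          simp [map_add, map_smul, h1, h2, h3]
        · intro hw
          ext u
          have := congrArg (fun g => g (u : E)) hw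
          simpa [hB', LinearMap.domRestrict₁₂_apply] using this
      have hkereq : Module.finrank ℝ (LinearMap.ker B') = Module.finrank ℝ (LinearMap.ker B) := by
        rw [hker']
        exact LinearEquiv.finrank_eq (Submodule.comapSubtypeEquivOfLe hkerle)
      have hWle : Module.finrank ℝ W ≤ n := by omega
      have := ih W B' halt' hWle
      omega


noncomputable instance fixAcg {V : Type*} [AddCommGroup V] [Module ℝ V]
    {E : Submodule ℝ (V × Module.Dual ℝ V)} (W : Submodule ℝ ↥E) : AddCommGroup ↥W :=
  @Submodule.addCommGroup ℝ ↥E _ _ _ W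

noncomputable instance fixMod {V : Type*} [AddCommGroup V] [Module ℝ V]
    {E : Submodule ℝ (V × Module.Dual ℝ V)} (W : Submodule ℝ ↥E) : Module ℝ ↥W :=
  inferInstanceAs
    (Module ℝ ↥(show Submodule ℝ ↥(show Submodule ℝ (V × (V →ₗ[ℝ] ℝ)) from E) from W))

noncomputable instance fixFin {V : Type*} [AddCommGroup V] [Module ℝ V] [FiniteDimensional ℝ V]
    {E : Submodule ℝ (V × Module.Dual ℝ V)} (W : Submodule ℝ ↥E) : FiniteDimensional ℝ ↥W :=
  inferInstance

set_option synthInstance.maxHeartbeats 1000000 in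
noncomputable instance fixFree {V : Type*} [AddCommGroup V] [Module ℝ V]
    (P : Submodule ℝ (V × Module.Dual ℝ V)) : Module.Free ℝ ↥P :=
  Module.Free.of_divisionRing ℝ ↥P

set_option synthInstance.maxHeartbeats 1000000 in
noncomputable instance fixFinite {V : Type*} [AddCommGroup V] [Module ℝ V] [FiniteDimensional ℝ V]
    (P : Submodule ℝ (V × Module.Dual ℝ V)) : Module.Finite ℝ ↥P :=
  inferInstanceAs (Module.Finite ℝ ↥(show Submodule ℝ (V × (V →ₗ[ℝ] ℝ)) from P))

section Lag
variable {V : Type*} [AddCommGroup V] [Module ℝ V]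

theorem lagrangian_pair_zero {E : Submodule ℝ (V × Module.Dual ℝ V)} (hE : IsLagrangian E)
    {x y : V × Module.Dual ℝ V} (hx : x ∈ E) (hy : y ∈ E) : x.2 y.1 + y.2 x.1 = 0 :=
  (hE x).mpr hx y hy

/-- The difference bilinear form on a subspace `E` of `V × V*` twisted by `σ`. -/
noncomputable def lagB (σ : V →ₗ[ℝ] Module.Dual ℝ V) (E : Submodule ℝ (V × Module.Dual ℝ V)) :
    ↥E →ₗ[ℝ] ↥E →ₗ[ℝ] ℝ :=
  LinearMap.mk₂ ℝ (fun x y => x.val.2 y.val.1 - σ x.val.1 y.val.1)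
    (by intro x x' y; simp; ring)
    (by intro c x y; simp; ring)
    (by intro x y y'; simp; ring)
    (by intro c x y; simp; ring)

theorem lagB_apply (σ : V →ₗ[ℝ] Module.Dual ℝ V) (E : Submodule ℝ (V × Module.Dual ℝ V))
    (x y : ↥E) : lagB σ E x y = x.val.2 y.val.1 - σ x.val.1 y.val.1 := rfl

theorem lagB_alt {σ : V →ₗ[ℝ] Module.Dual ℝ V} (hσ : ∀ v, σ v v = 0)
    {E : Submodule ℝ (V × Module.Dual ℝ V)} (hE : IsLagrangian E) (x : ↥E) :
    lagB σ E x x = 0 := by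
  have h1 : x.val.2 x.val.1 + x.val.2 x.val.1 = 0 := lagrangian_pair_zero hE x.2 x.2
  have h2 := hσ x.val.1
  rw [lagB_apply]
  linarith

theorem lagB_ker_mem {σ : V →ₗ[ℝ] Module.Dual ℝ V}
    {E : Submodule ℝ (V × Module.Dual ℝ V)} (hE : IsLagrangian E) (x : ↥E) :
    x ∈ LinearMap.ker (lagB σ E) ↔ ((0 : V), x.val.2 - σ x.val.1) ∈ E := by
  rw [LinearMap.mem_ker]
  constructor
  · intro hx
    apply (hE _).mp
    intro y hy
    have := congrArg (fun g => g ⟨y, hy⟩) hx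
    simp only [lagB_apply, LinearMap.zero_apply] at this
    simp only [diracPair, map_zero, LinearMap.zero_apply, LinearMap.sub_apply]
    linarith
  · intro hx
    ext y
    have := lagrangian_pair_zero hE hx y.2
    simp only [diracPair, map_zero, LinearMap.zero_apply, LinearMap.sub_apply] at this
    simp only [lagB_apply, LinearMap.zero_apply]
    linarith

/-- Decomposition of the kernel of `lagB`. -/
noncomputable def lagPhi (σ : V →ₗ[ℝ] Module.Dual ℝ V)
    {E : Submodule ℝ (V × Module.Dual ℝ V)} (hE : IsLagrangian E) :
    ↥(LinearMap.ker (lagB σ E)) →ₗ[ℝ]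
      ↥(E ⊓ σ.graph) × ↥(E ⊓ (⊥ : Submodule ℝ V).prod (⊤ : Submodule ℝ (Module.Dual ℝ V))) where
  toFun x :=
    (⟨(x.val.val.1, σ x.val.val.1), by
        refine Submodule.mem_inf.mpr ⟨?_, ?_⟩
        · have h1 : ((0 : V), x.val.val.2 - σ x.val.val.1) ∈ E :=
            (lagB_ker_mem hE x.val).mp x.2
          have h2 := E.sub_mem x.val.property h1
          convert h2 using 1
          ext <;> simp
        · simp [LinearMap.mem_graph_iff]⟩,
     ⟨((0 : V), x.val.val.2 - σ x.val.val.1), by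
        refine Submodule.mem_inf.mpr ⟨(lagB_ker_mem hE x.val).mp x.2, ?_⟩
        simp [Submodule.mem_prod]⟩)
  map_add' x y := by
    refine Prod.ext (Subtype.ext ?_) (Subtype.ext ?_) <;> simp <;> abel
  map_smul' c x := by
    refine Prod.ext (Subtype.ext ?_) (Subtype.ext ?_) <;> simp [smul_sub]

theorem lagPhi_bijective (σ : V →ₗ[ℝ] Module.Dual ℝ V)
    {E : Submodule ℝ (V × Module.Dual ℝ V)} (hE : IsLagrangian E) :
    Function.Bijective (lagPhi σ hE) := by
  constructor
  · intro x y hxy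
    rw [Prod.ext_iff] at hxy
    obtain ⟨h1, h2⟩ := hxy
    rw [Subtype.ext_iff, Prod.ext_iff] at h1 h2
    simp only [lagPhi, LinearMap.coe_mk, AddHom.coe_mk] at h1 h2
    obtain ⟨e1, -⟩ := h1
    obtain ⟨-, e2⟩ := h2
    apply Subtype.ext; apply Subtype.ext
    refine Prod.ext e1 ?_
    rw [e1] at e2
    exact sub_left_inj.mp e2
  · rintro ⟨a, b⟩
    have ha := Submodule.mem_inf.mp a.2
    have hb := Submodule.mem_inf.mp b.2
    have hag : a.val.2 = σ a.val.1 := (LinearMap.mem_graph_iff _ _).mp ha.2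
    have hb1 : b.val.1 = 0 := (Submodule.mem_prod.mp hb.2).1
    have hxE : a.val + b.val ∈ E := E.add_mem ha.1 hb.1
    have hkey : ((0 : V), (a.val + b.val).2 - σ (a.val + b.val).1) = b.val := by
      rw [Prod.ext_iff]
      refine ⟨hb1.symm, ?_⟩
      simp [Prod.fst_add, Prod.snd_add, hb1, hag]
    have hkey1 : ((a.val + b.val).1, σ (a.val + b.val).1) = a.val := by
      rw [Prod.ext_iff]
      have h1 : (a.val + b.val).1 = a.val.1 := by simp [hb1]
      refine ⟨h1, ?_⟩
      rw [h1, ← hag]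
    have hxker : (⟨a.val + b.val, hxE⟩ : ↥E) ∈ LinearMap.ker (lagB σ E) := by
      rw [lagB_ker_mem hE, hkey]
      exact hb.1
    refine ⟨⟨⟨a.val + b.val, hxE⟩, hxker⟩, ?_⟩
    refine Prod.ext (Subtype.ext ?_) (Subtype.ext ?_)
    · simpa only [lagPhi, LinearMap.coe_mk, AddHom.coe_mk] using hkey1
    · simpa only [lagPhi, LinearMap.coe_mk, AddHom.coe_mk] using hkey

theorem lagrangian_graph_parity [FiniteDimensional ℝ V]
    (E : Submodule ℝ (V × Module.Dual ℝ V)) (hE : IsLagrangian E)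
    (σ : V →ₗ[ℝ] Module.Dual ℝ V) (hσ : ∀ v, σ v v = 0) :
    (Module.finrank ℝ ↥(E ⊓ σ.graph)
      + Module.finrank ℝ ↥(E ⊓ (⊥ : Submodule ℝ V).prod (⊤ : Submodule ℝ (Module.Dual ℝ V)))) % 2
      = Module.finrank ℝ ↥E % 2 := by
  have hφ : Module.finrank ℝ ↥(LinearMap.ker (lagB σ E)) =
      Module.finrank ℝ ↥(E ⊓ σ.graph)
      + Module.finrank ℝ ↥(E ⊓ (⊥ : Submodule ℝ V).prod (⊤ : Submodule ℝ (Module.Dual ℝ V))) := by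
    rw [LinearEquiv.finrank_eq (LinearEquiv.ofBijective _ (lagPhi_bijective σ hE))]
    exact Module.finrank_prod
  have := altKerParity (Module.finrank ℝ ↥E) ↥E (lagB σ E) (lagB_alt hσ hE) le_rfl
  omega

end Lag

section Strong
variable {V V' : Type*} [AddCommGroup V] [Module ℝ V] [AddCommGroup V'] [Module ℝ V']

/-- The map `E ⊓ graph ω → E' ⊓ (V' ⊕ 0)` induced by a strong Dirac morphism. -/
noncomputable def strongMap (Θ : V →ₗ[ℝ] V') (ω : V →ₗ[ℝ] Module.Dual ℝ V)
    {E : Submodule ℝ (V × Module.Dual ℝ V)} {E' : Submodule ℝ (V' × Module.Dual ℝ V')}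
    (h : IsStrongDiracMorphism Θ ω E E') :
    ↥(E ⊓ ω.graph) →ₗ[ℝ]
      ↥(E' ⊓ (⊤ : Submodule ℝ V').prod (⊥ : Submodule ℝ (Module.Dual ℝ V'))) where
  toFun x := ⟨(Θ x.val.1, 0), by
    refine Submodule.mem_inf.mpr ⟨?_, by simp [Submodule.mem_prod]⟩
    have hx := Submodule.mem_inf.mp x.2
    have hg : x.val.2 = ω x.val.1 := (LinearMap.mem_graph_iff _ _).mp hx.2
    have : (Θ x.val.1, (0 : Module.Dual ℝ V')) ∈ (E' : Set (V' × Module.Dual ℝ V')) := by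
      rw [h.1]
      exact ⟨x.val, hx.1, rfl, by simp [hg]⟩
    exact this⟩
  map_add' x y := by apply Subtype.ext; simp
  map_smul' c x := by apply Subtype.ext; simp

theorem strongMap_bijective (Θ : V →ₗ[ℝ] V') (ω : V →ₗ[ℝ] Module.Dual ℝ V)
    {E : Submodule ℝ (V × Module.Dual ℝ V)} {E' : Submodule ℝ (V' × Module.Dual ℝ V')}
    (h : IsStrongDiracMorphism Θ ω E E') : Function.Bijective (strongMap Θ ω h) := by
  constructor
  · intro x y hxy
    rw [Subtype.ext_iff, Prod.ext_iff] at hxy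
    simp only [strongMap, LinearMap.coe_mk, AddHom.coe_mk] at hxy
    have hsub : Θ (x.val.1 - y.val.1) = 0 := by
      rw [map_sub, hxy.1, sub_self]
    have hmemE : x.val - y.val ∈ E :=
      E.sub_mem (Submodule.mem_inf.mp x.2).1 (Submodule.mem_inf.mp y.2).1
    have hgx : x.val.2 = ω x.val.1 := (LinearMap.mem_graph_iff _ _).mp (Submodule.mem_inf.mp x.2).2
    have hgy : y.val.2 = ω y.val.1 := (LinearMap.mem_graph_iff _ _).mp (Submodule.mem_inf.mp y.2).2
    have hrel : DiracRel Θ ω (x.val - y.val) 0 := by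
      constructor
      · show (0 : V' × Module.Dual ℝ V').1 = Θ (x.val - y.val).1
        simp only [Prod.fst_sub, Prod.fst_zero]
        rw [hsub]
      · show (x.val - y.val).2 = ω (x.val - y.val).1 + ((0 : V' × Module.Dual ℝ V').2).comp Θ
        simp only [Prod.snd_sub, Prod.fst_sub, Prod.snd_zero, map_sub]
        rw [hgx, hgy]
        simp
    have := h.2 _ hmemE hrel
    exact Subtype.ext (sub_eq_zero.mp this)
  · rintro y
    have hy := Submodule.mem_inf.mp y.2
    have hy2 : y.val.2 = 0 := (Submodule.mem_prod.mp hy.2).2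
    have : y.val ∈ (E' : Set (V' × Module.Dual ℝ V')) := hy.1
    rw [h.1] at this
    obtain ⟨x, hxE, hrel1, hrel2⟩ := this
    have hxg : x ∈ ω.graph := by
      rw [LinearMap.mem_graph_iff]
      rw [hrel2, hy2]
      simp
    refine ⟨⟨x, Submodule.mem_inf.mpr ⟨hxE, hxg⟩⟩, ?_⟩
    apply Subtype.ext
    refine Prod.ext ?_ ?_
    · exact hrel1.symm
    · exact hy2.symm

end Strong

/-- Strong Dirac morphisms preserve the parity
`dim(E ∩ V) mod 2` of Lagrangian subspaces. Here `V ⊂ V ⊕ V*` is embedded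
as `V ⊕ 0 = ⊤.prod ⊥`. -/
theorem strong_Dirac_morphism_preserves_parity
    {V V' : Type*} [AddCommGroup V] [Module ℝ V] [FiniteDimensional ℝ V]
    [AddCommGroup V'] [Module ℝ V'] [FiniteDimensional ℝ V']
    (Θ : V →ₗ[ℝ] V') (ω : V →ₗ[ℝ] Module.Dual ℝ V) (hω : ∀ v, ω v v = 0)
    (E : Submodule ℝ (V × Module.Dual ℝ V)) (hE : IsLagrangian E)
    (E' : Submodule ℝ (V' × Module.Dual ℝ V')) (hE' : IsLagrangian E')
    (h : IsStrongDiracMorphism Θ ω E E') :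
    Module.finrank ℝ ↥(E ⊓ (⊤ : Submodule ℝ V).prod (⊥ : Submodule ℝ (Module.Dual ℝ V))) % 2
      = Module.finrank ℝ
          ↥(E' ⊓ (⊤ : Submodule ℝ V').prod (⊥ : Submodule ℝ (Module.Dual ℝ V'))) % 2 := by
  have h2 := lagrangian_graph_parity E hE ω hω
  have h3 := lagrangian_graph_parity E hE 0 (by simp)
  have hgr0 : (0 : V →ₗ[ℝ] Module.Dual ℝ V).graph
      = (⊤ : Submodule ℝ V).prod (⊥ : Submodule ℝ (Module.Dual ℝ V)) := by
    ext x
    simp [LinearMap.mem_graph_iff, Submodule.mem_prod, eq_comm]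
  rw [hgr0] at h3
  have h1 : Module.finrank ℝ
        ↥(E' ⊓ (⊤ : Submodule ℝ V').prod (⊥ : Submodule ℝ (Module.Dual ℝ V'))) =
      Module.finrank ℝ ↥(E ⊓ ω.graph) :=
    (LinearEquiv.finrank_eq (LinearEquiv.ofBijective _ (strongMap_bijective Θ ω h))).symm
  omega
end

section
/- Let (Θ,ω): (𝕍,E) ⇢ (𝕍',E') be a strong Dirac morphism. For t ∈ [0,1] define the morphism (j_t, tω): 𝕍 ⇢ 𝕍⊕𝕍' by j_t(v) = ((1−t)v, tΘ(v)). Then ker(j_t, tω) = 0 for t ≠ 1 and ker(j₁, ω) = ker(Θ,ω); consequently E ∩ ker(j_t, tω) = 0 for all t, and the forward images E_t of E under (j_t, tω) form a family of Lagrangian subspaces of 𝕍⊕𝕍' with E₀ = E ⊕ (V')* and E₁ = V* ⊕ E'. -/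
lemma omega_skew {V : Type*} [AddCommGroup V] [Module ℝ V]
    (ω : V →ₗ[ℝ] Module.Dual ℝ V) (hω : ∀ v, ω v v = 0) (v w : V) :
    ω v w = - ω w v := by
  have h := hω (v + w)
  simp only [map_add, LinearMap.add_apply, hω] at h
  linarith

open Module LinearMap in
lemma dual_surj_helper {A B : Type*} [AddCommGroup A] [Module ℝ A]
    [AddCommGroup B] [Module ℝ B] [FiniteDimensional ℝ B]
    (ρ : A →ₗ[ℝ] Module.Dual ℝ B) (c : A →ₗ[ℝ] ℝ) (h : ∀ x ∈ LinearMap.ker ρ, c x = 0) :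
    ∃ k : B, ∀ x, c x = ρ x k := by
  have hc : c ∈ LinearMap.range ρ.dualMap := by
    rw [LinearMap.range_dualMap_eq_dualAnnihilator_ker, Submodule.mem_dualAnnihilator]
    exact h
  obtain ⟨g, hg⟩ := hc
  obtain ⟨k, hk⟩ := (Module.evalEquiv ℝ B).surjective g
  refine ⟨k, fun x => ?_⟩
  rw [← hg, LinearMap.dualMap_apply, ← hk, Module.evalEquiv_apply]
  rfl

set_option maxHeartbeats 1600000 in
open Module LinearMap in
lemma fwdImage_lagrangian {V W : Type*} [AddCommGroup V] [Module ℝ V] [FiniteDimensional ℝ V]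
    [AddCommGroup W] [Module ℝ W] [FiniteDimensional ℝ W]
    (φ : V →ₗ[ℝ] W) (ω : V →ₗ[ℝ] Module.Dual ℝ V) (hω : ∀ v, ω v v = 0)
    (E : Submodule ℝ (V × Module.Dual ℝ V)) (hE : IsLagrangian E) :
    ∃ F : Submodule ℝ (W × Module.Dual ℝ W),
      (F : Set (W × Module.Dual ℝ W)) = fwdImage φ ω E ∧ IsLagrangian F := by
  classical
  set T : V × Dual ℝ W →ₗ[ℝ] V × Dual ℝ V :=
    LinearMap.prod (LinearMap.fst ℝ V (Dual ℝ W))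
      (ω.comp (LinearMap.fst ℝ V (Dual ℝ W)) + φ.dualMap.comp (LinearMap.snd ℝ V (Dual ℝ W)))
    with hT
  set S : V × Dual ℝ W →ₗ[ℝ] W × Dual ℝ W := φ.prodMap (LinearMap.id) with hS
  have hTapp : ∀ (v : V) (δ : Dual ℝ W), T (v, δ) = (v, ω v + δ.comp φ) := by
    intro v δ
    simp [hT, LinearMap.dualMap_apply']
  have hSapp : ∀ (v : V) (δ : Dual ℝ W), S (v, δ) = (φ v, δ) := fun _ _ => rfl
  have hmemF : ∀ (w : W) (β : Dual ℝ W),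
      (w, β) ∈ (E.comap T).map S ↔ ∃ v : V, (v, ω v + β.comp φ) ∈ E ∧ φ v = w := by
    intro w β
    rw [Submodule.mem_map]
    constructor
    · rintro ⟨⟨v, δ⟩, hv, hvd⟩
      rw [hSapp] at hvd
      obtain ⟨h1, h2⟩ := Prod.mk.injEq _ _ _ _ ▸ hvd
      rw [Submodule.mem_comap, hTapp] at hv
      subst h2
      exact ⟨v, hv, h1⟩
    · rintro ⟨v, hv, hvw⟩
      exact ⟨(v, β), by rw [Submodule.mem_comap, hTapp]; exact hv, by rw [hSapp, hvw]⟩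
  refine ⟨(E.comap T).map S, ?_, ?_⟩
  · ext ⟨w, β⟩
    rw [SetLike.mem_coe, hmemF]
    constructor
    · rintro ⟨v, hv, hvw⟩
      exact ⟨(v, ω v + β.comp φ), hv, hvw.symm, rfl⟩
    · rintro ⟨⟨v, α⟩, hv, h1, h2⟩
      refine ⟨v, ?_, h1.symm⟩
      have : α = ω v + β.comp φ := h2
      rwa [this] at hv
  · -- Lagrangian
    intro x
    constructor
    · -- hard direction
      intro hperp
      obtain ⟨w, β⟩ := x
      have hp : ∀ v : V, ∀ δ : Dual ℝ W, (v, ω v + δ.comp φ) ∈ E →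
          β (φ v) + δ w = 0 := by
        intro v δ hv
        have hmem : ((φ v, δ) : W × Dual ℝ W) ∈ (E.comap T).map S :=
          (hmemF _ _).mpr ⟨v, hv, rfl⟩
        simpa [diracPair] using hperp _ hmem
      -- step A : w ∈ range φ
      have hw : w ∈ LinearMap.range φ := by
        rw [← Subspace.forall_mem_dualAnnihilator_apply_eq_zero_iff (LinearMap.range φ) w]
        intro f hf
        have hfφ : f.comp φ = 0 := by
          ext u; exact (Submodule.mem_dualAnnihilator f).mp hf (φ u) ⟨u, rfl⟩
        have h0 := hp 0 f (by simp [hfφ]; exact E.zero_mem)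
        simpa using h0
      obtain ⟨u, hu⟩ := hw
      -- step B
      set N := LinearMap.ker φ with hN
      set ρ : ↥E →ₗ[ℝ] Dual ℝ ↥N :=
        (N.subtype.dualMap).comp
          (((LinearMap.snd ℝ V (Dual ℝ V)) - ω.comp (LinearMap.fst ℝ V (Dual ℝ V))).comp
            E.subtype) with hρ
      have hρ_apply : ∀ (x : ↥E) (k : ↥N),
          ρ x k = (x : V × Dual ℝ V).2 (k : V) - ω (x : V × Dual ℝ V).1 (k : V) := by
        intro x k
        simp [hρ, LinearMap.dualMap_apply']
      set c : ↥E →ₗ[ℝ] ℝ :=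
        { toFun := fun x => ω u (x : V × Dual ℝ V).1 + β (φ (x : V × Dual ℝ V).1)
            + (x : V × Dual ℝ V).2 u
          map_add' := by intros; simp; ring
          map_smul' := by intros; simp; ring } with hc
      have hc_apply : ∀ x : ↥E,
          c x = ω u (x : V × Dual ℝ V).1 + β (φ (x : V × Dual ℝ V).1)
            + (x : V × Dual ℝ V).2 u := fun _ => rfl
      -- c vanishes on ker ρ
      have hcker : ∀ x ∈ LinearMap.ker ρ, c x = 0 := by
        intro x hx
        have hxann : (x : V × Dual ℝ V).2 - ω (x : V × Dual ℝ V).1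
            ∈ (LinearMap.ker φ).dualAnnihilator := by
          rw [Submodule.mem_dualAnnihilator]
          intro k hk
          have h0 : ρ x ⟨k, hk⟩ = 0 := by rw [LinearMap.mem_ker.mp hx]; rfl
          rw [hρ_apply] at h0
          simpa [LinearMap.sub_apply] using h0
        rw [← LinearMap.range_dualMap_eq_dualAnnihilator_ker] at hxann
        obtain ⟨δ, hδ⟩ := hxann
        rw [LinearMap.dualMap_apply'] at hδ
        have hδ' : (x : V × Dual ℝ V).2 = ω (x : V × Dual ℝ V).1 + δ.comp φ := by
          rw [hδ]; abel
        have hmem : ((x : V × Dual ℝ V).1, ω (x : V × Dual ℝ V).1 + δ.comp φ) ∈ E := by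
          rw [← hδ']; exact x.2
        have h2 := hp _ δ hmem
        have hskew := omega_skew ω hω u (x : V × Dual ℝ V).1
        rw [hc_apply, hδ']
        simp only [LinearMap.add_apply, LinearMap.comp_apply, ← hu] at *
        linarith
      obtain ⟨k, hck⟩ := dual_surj_helper (A := ↥E) (B := ↥N) ρ c hcker
      -- the preimage element
      have hEmem : (u - (k : V), ω (u - (k : V)) + β.comp φ) ∈ E := by
        rw [← hE]
        rintro ⟨v, α⟩ hy
        have h1 := hck ⟨(v, α), hy⟩
        rw [hc_apply, hρ_apply] at h1
        simp only at h1
        have hskew1 := omega_skew ω hω v (k : V)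
        simp only [diracPair, map_sub, LinearMap.add_apply, LinearMap.sub_apply,
          LinearMap.comp_apply, map_sub]
        linarith
      rw [hmemF]
      refine ⟨u - (k : V), hEmem, ?_⟩
      rw [map_sub, hu, LinearMap.mem_ker.mp k.2]
      abel
    · -- easy direction
      intro hx y hy
      obtain ⟨w, β⟩ := x
      obtain ⟨w', β'⟩ := y
      rw [hmemF] at hx hy
      obtain ⟨v, hv, rfl⟩ := hx
      obtain ⟨v', hv', rfl⟩ := hy
      have h0 := (hE _).mpr hv _ hv'
      have hskew := omega_skew ω hω v v'
      simp only [diracPair, LinearMap.add_apply, LinearMap.comp_apply] at h0 ⊢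
      linarith

/-- the standard path of Lagrangian subspaces associated to a strong
Dirac morphism.  For `t ∈ ℝ` let `j_t(v) = ((1-t)v, tΘv)` and `ω_t = tω`.  Then
`ker(j_t, tω) = 0` for `t ≠ 1`, `ker(j_1, ω) = ker(Θ, ω)`, `E ∩ ker(j_t,tω) = 0`
for all `t`, the forward images `E_t` of `E` are Lagrangian subspaces of `𝕍 ⊕ 𝕍'`,
and `E_0 = E ⊕ (V')*`, `E_1 = V* ⊕ E'`. -/
theorem standard_path_of_strong_Dirac_morphism
    {V V' : Type*} [AddCommGroup V] [Module ℝ V] [FiniteDimensional ℝ V]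
    [AddCommGroup V'] [Module ℝ V'] [FiniteDimensional ℝ V']
    (Θ : V →ₗ[ℝ] V') (ω : V →ₗ[ℝ] Module.Dual ℝ V) (hω : ∀ v, ω v v = 0)
    (E : Submodule ℝ (V × Module.Dual ℝ V)) (hE : IsLagrangian E)
    (E' : Submodule ℝ (V' × Module.Dual ℝ V')) (hE' : IsLagrangian E')
    (h : IsStrongDiracMorphism Θ ω E E')
    (j : ℝ → (V →ₗ[ℝ] V × V'))
    (hj : ∀ t, j t = LinearMap.prod ((1 - t) • LinearMap.id) (t • Θ)) :
    (∀ t, t ≠ 1 → ∀ x, DiracRel (j t) (t • ω) x 0 → x = 0) ∧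
    (∀ x : V × Module.Dual ℝ V, DiracRel (j 1) ((1 : ℝ) • ω) x 0 ↔ DiracRel Θ ω x 0) ∧
    (∀ t, ∀ x ∈ E, DiracRel (j t) (t • ω) x 0 → x = 0) ∧
    (∀ t, ∃ Et : Submodule ℝ ((V × V') × Module.Dual ℝ (V × V')),
        (Et : Set ((V × V') × Module.Dual ℝ (V × V'))) = fwdImage (j t) (t • ω) E ∧
        IsLagrangian Et) ∧
    (fwdImage (j 0) ((0 : ℝ) • ω) E
        = {x : (V × V') × Module.Dual ℝ (V × V') |
            x.1.2 = 0 ∧ (x.1.1, x.2.comp (LinearMap.inl ℝ V V')) ∈ E}) ∧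
    (fwdImage (j 1) ((1 : ℝ) • ω) E
        = {x : (V × V') × Module.Dual ℝ (V × V') |
            x.1.1 = 0 ∧ (x.1.2, x.2.comp (LinearMap.inr ℝ V V')) ∈ E'}) := by
  have hj_app : ∀ t v, j t v = ((1 - t) • v, t • Θ v) := by
    intro t v; rw [hj]; rfl
  have c2 : ∀ x : V × Module.Dual ℝ V,
      DiracRel (j 1) ((1 : ℝ) • ω) x 0 ↔ DiracRel Θ ω x 0 := by
    rintro ⟨v, α⟩
    simp only [DiracRel, hj_app, Prod.fst_zero, Prod.snd_zero, LinearMap.zero_comp,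
      add_zero, one_smul, sub_self, zero_smul, Prod.ext_iff, Prod.fst_zero, Prod.snd_zero,
      LinearMap.smul_apply, LinearMap.zero_apply, eq_self_iff_true, true_and]
  have c1 : ∀ t, t ≠ 1 → ∀ x, DiracRel (j t) (t • ω) x 0 → x = 0 := by
    rintro t ht ⟨v, α⟩ ⟨h1, h2⟩
    rw [hj_app] at h1
    have hv : v = 0 := by
      have h1' : (0 : V) = (1 - t) • v := congrArg Prod.fst h1
      have hne : (1 - t) ≠ 0 := sub_ne_zero.mpr (Ne.symm ht)
      have := (smul_eq_zero.mp h1'.symm).resolve_left hne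
      exact this
    have hα : α = 0 := by
      rw [hv] at h2
      simpa using h2
    rw [Prod.ext_iff]
    exact ⟨hv, hα⟩
  have c3 : ∀ t, ∀ x ∈ E, DiracRel (j t) (t • ω) x 0 → x = 0 := by
    intro t x hxE hrel
    by_cases ht : t = 1
    · subst ht
      exact h.2 x hxE ((c2 x).mp hrel)
    · exact c1 t ht x hrel
  refine ⟨c1, c2, c3, ?_, ?_, ?_⟩
  · intro t
    exact fwdImage_lagrangian (j t) (t • ω)
      (fun v => by simp [hω v]) E hE
  · -- E_0
    have hj0 : j 0 = LinearMap.inl ℝ V V' := by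
      rw [hj]; ext v <;> simp
    ext ⟨⟨a, b⟩, β⟩
    constructor
    · rintro ⟨⟨v, α⟩, hvE, h1, h2⟩
      simp only [hj0, LinearMap.inl_apply, Prod.ext_iff] at h1
      obtain ⟨ha, hb⟩ := h1
      simp only [zero_smul, LinearMap.zero_apply, zero_add] at h2
      refine ⟨hb, ?_⟩
      show (a, β.comp (LinearMap.inl ℝ V V')) ∈ E
      rw [← hj0, ← h2, ha]
      exact hvE
    · rintro ⟨hb, hmem⟩
      have hb' : b = 0 := hb
      refine ⟨(a, β.comp (LinearMap.inl ℝ V V')), hmem, ?_, ?_⟩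
      · simp [hj0, hb', Prod.ext_iff]
      · simp [hj0]
  · -- E_1
    have hj1c : ∀ β : Module.Dual ℝ (V × V'),
        β.comp (j 1) = (β.comp (LinearMap.inr ℝ V V')).comp Θ := by
      intro β; ext v
      simp [hj_app]
    ext ⟨⟨a, b⟩, β⟩
    constructor
    · rintro ⟨⟨v, α⟩, hvE, h1, h2⟩
      rw [hj_app] at h1
      simp only [sub_self, zero_smul, one_smul, Prod.ext_iff] at h1
      obtain ⟨ha, hb⟩ := h1
      refine ⟨ha, ?_⟩
      show ((b : V'), β.comp (LinearMap.inr ℝ V V')) ∈ E'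
      rw [← SetLike.mem_coe, (h.1 : (E' : Set _) = fwdImage Θ ω E)]
      refine ⟨(v, α), hvE, ?_, ?_⟩
      · exact hb
      · rw [h2, hj1c]
        simp
    · rintro ⟨ha, hmem⟩
      rw [← SetLike.mem_coe, (h.1 : (E' : Set _) = fwdImage Θ ω E)] at hmem
      obtain ⟨⟨v, α⟩, hvE, h1, h2⟩ := hmem
      refine ⟨(v, α), hvE, ?_, ?_⟩
      · rw [hj_app]
        simp only [sub_self, zero_smul, one_smul, Prod.ext_iff]
        exact ⟨ha, h1⟩
      · rw [h2, hj1c]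
        simp
end

section
/- Let X be a Euclidean vector space, A₁, A₂ ∈ O(X), A = A₁A₂, and let e_A(ξ) = ((I−A⁻¹)ξ, (I+A⁻¹)ξ/2) denote the parametrization of the Lagrangian subspace E_A. Let Σ((A₁,ξ₁),(A₂,ξ₂)) = (A₁A₂, A₂⁻¹ξ₁+ξ₂) be the semidirect-product multiplication, and σ the 2-form on X⊕X given at (A₁,A₂) by σ((ξ₁,ξ₂),(ζ₁,ζ₂)) = ½(B(ξ₁, A₂ζ₂) − B(A₂ξ₂, ζ₁)). Then e_{A₁}(ξ₁) × e_{A₂}(ξ₂) is related to e_A(ξ) under the morphism (Σ,σ) if and only if ξ₁ = ξ₂ = ξ. In particular (Σ,σ) defines a strong Dirac morphism from the product of the tautological Dirac structures at (A₁,A₂) to the tautological Dirac structure at A₁A₂. -/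
open RealInnerProductSpace

/-- The parametrization `e_A(ξ) = ((I - A⁻¹)ξ, (I + A⁻¹)ξ/2)` of `E_A`. -/
noncomputable def eltOf {X : Type*} [NormedAddCommGroup X] [InnerProductSpace ℝ X]
    (A : X ≃ₗᵢ[ℝ] X) (ξ : X) : X × X :=
  (ξ - A.symm ξ, (2⁻¹ : ℝ) • (ξ + A.symm ξ))

/-- The element `e_{A₁}(ξ₁) × e_{A₂}(ξ₂)` of the product `𝕏 × 𝕏`, rearranged as an
element of `(X ⊕ X) ⊕ (X ⊕ X)* `. -/
noncomputable def prodElt {X : Type*} [NormedAddCommGroup X] [InnerProductSpace ℝ X]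
    (A₁ A₂ : X ≃ₗᵢ[ℝ] X) (ξ₁ ξ₂ : X) : (X × X) × (X × X) :=
  (((eltOf A₁ ξ₁).1, (eltOf A₂ ξ₂).1), ((eltOf A₁ ξ₁).2, (eltOf A₂ ξ₂).2))

/-- The semidirect product multiplication map at `(A₁, A₂)`: `(ξ₁, ξ₂) ↦ A₂⁻¹ξ₁ + ξ₂`. -/
noncomputable def multMap {X : Type*} [NormedAddCommGroup X] [InnerProductSpace ℝ X]
    (A₂ : X ≃ₗᵢ[ℝ] X) (v : X × X) : X :=
  A₂.symm v.1 + v.2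

/-- The 2-form `σ` at `(A₁, A₂)`:
`σ((ξ₁,ξ₂),(ζ₁,ζ₂)) = ½(B(ξ₁, A₂ζ₂) − B(A₂ξ₂, ζ₁))`. -/
noncomputable def sigmaForm {X : Type*} [NormedAddCommGroup X] [InnerProductSpace ℝ X]
    (A₂ : X ≃ₗᵢ[ℝ] X) (v w : X × X) : ℝ :=
  (2⁻¹ : ℝ) * (⟪v.1, A₂ w.2⟫ - ⟪A₂ v.2, w.1⟫)

/-- The relation defined by the morphism `(Σ, σ)` at `(A₁, A₂)`:
`(v, α) ∼ (v', α')` iff `v' = Σ(v)` and `α = ι_v σ + Σ*α'`, where the dual spaces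
are identified with the underlying spaces via the inner product. -/
noncomputable def multRel {X : Type*} [NormedAddCommGroup X] [InnerProductSpace ℝ X]
    (A₂ : X ≃ₗᵢ[ℝ] X) (x : (X × X) × (X × X)) (y : X × X) : Prop :=
  y.1 = multMap A₂ x.1 ∧
    ∀ u : X × X, ⟪x.2.1, u.1⟫ + ⟪x.2.2, u.2⟫ = sigmaForm A₂ x.1 u + ⟪y.2, multMap A₂ u⟫


section Aux
variable {X : Type*} [NormedAddCommGroup X] [InnerProductSpace ℝ X]

private lemma inner_map_left' (A : X ≃ₗᵢ[ℝ] X) (x w : X) : ⟪A x, w⟫ = ⟪x, A.symm w⟫ := by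
  nth_rewrite 1 [← A.apply_symm_apply w]
  exact A.inner_map_map x (A.symm w)

private lemma multRel_iff (A₁ A₂ : X ≃ₗᵢ[ℝ] X) (ξ₁ ξ₂ : X) (y : X × X) :
    multRel A₂ (prodElt A₁ A₂ ξ₁ ξ₂) y ↔ ξ₁ = ξ₂ ∧ y = eltOf (A₂.trans A₁) ξ₁ := by
  constructor
  · rintro ⟨h1, h2⟩
    have V1 : ξ₁ + A₁.symm ξ₁ = ξ₂ - A₂ ξ₂ + (2:ℝ) • A₂ y.2 := by
      apply ext_inner_right ℝ
      intro w
      have h := h2 (w, 0)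
      simp only [prodElt, eltOf, sigmaForm, multMap, map_zero, inner_zero_right, add_zero,
        inner_zero_left, zero_sub, map_sub, A₂.apply_symm_apply, inner_sub_left,
        inner_add_left, inner_smul_left, ← inner_map_left', starRingEnd_apply, star_trivial,
        LinearIsometryEquiv.symm_symm] at h ⊢
      linarith
    have V2 : ξ₂ + A₂.symm ξ₂ = A₂.symm ξ₁ - A₂.symm (A₁.symm ξ₁) + (2:ℝ) • y.2 := by
      apply ext_inner_right ℝ
      intro w
      have h := h2 (0, w)
      simp only [prodElt, eltOf, sigmaForm, multMap, map_zero, inner_zero_right,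
        inner_zero_left, zero_add, sub_zero, map_sub, inner_sub_left,
        inner_add_left, inner_smul_left, inner_map_left', starRingEnd_apply, star_trivial,
        LinearIsometryEquiv.symm_symm] at h ⊢
      linarith
    have V1' : A₂.symm ξ₁ + A₂.symm (A₁.symm ξ₁) = A₂.symm ξ₂ - ξ₂ + (2:ℝ) • y.2 := by
      have := congrArg A₂.symm V1
      simpa [map_add, map_sub, map_smul, A₂.symm_apply_apply] using this
    have hξ : ξ₁ = ξ₂ := by
      have h3 : A₂.symm ξ₁ = A₂.symm ξ₂ := by
        linear_combination (norm := module) (2⁻¹:ℝ) • V1' - (2⁻¹:ℝ) • V2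
      simpa using congrArg A₂ h3
    refine ⟨hξ, ?_⟩
    rw [hξ] at V2 h1
    have hy2 : y.2 = (2⁻¹:ℝ) • (ξ₂ + A₂.symm (A₁.symm ξ₂)) := by
      linear_combination (norm := module) (-(2⁻¹:ℝ)) • V2
    have hy1 : y.1 = ξ₂ - A₂.symm (A₁.symm ξ₂) := by
      rw [h1]
      simp only [prodElt, eltOf, multMap, map_sub, A₂.apply_symm_apply]
      module
    rw [Prod.ext_iff]
    constructor
    · simpa [eltOf, hξ, LinearIsometryEquiv.trans_apply, LinearIsometryEquiv.symm_trans] using hy1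
    · simpa [eltOf, hξ, LinearIsometryEquiv.trans_apply, LinearIsometryEquiv.symm_trans] using hy2
  · rintro ⟨rfl, rfl⟩
    constructor
    · simp only [prodElt, eltOf, multMap, map_sub, A₂.apply_symm_apply,
        LinearIsometryEquiv.symm_trans, LinearIsometryEquiv.trans_apply]
      module
    · intro u
      simp only [prodElt, eltOf, sigmaForm, multMap, map_sub, map_add, map_smul,
        A₂.apply_symm_apply, LinearIsometryEquiv.symm_trans, LinearIsometryEquiv.trans_apply,
        inner_add_left, inner_sub_left, inner_smul_left, inner_add_right,
        inner_map_left', starRingEnd_apply, star_trivial,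
        LinearIsometryEquiv.symm_symm, A₁.apply_symm_apply, A₂.symm_apply_apply,
        A₁.symm_apply_apply]
      ring

private lemma eltOf_inj (A : X ≃ₗᵢ[ℝ] X) {a b : X} (h : eltOf A a = eltOf A b) : a = b := by
  obtain ⟨h1, h2⟩ := Prod.ext_iff.mp h
  simp only [eltOf] at h1 h2
  linear_combination (norm := module) (2⁻¹:ℝ) • h1 + h2

private lemma mem_lagrangianOf (A : X ≃ₗᵢ[ℝ] X) (y : X × X) :
    y ∈ lagrangianOf A ↔ ∃ ξ, y = eltOf A ξ := by
  simp only [lagrangianOf, LinearMap.mem_range, LinearMap.prod_apply, Pi.prod,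
    LinearMap.sub_apply, LinearMap.smul_apply, LinearMap.add_apply, LinearMap.id_apply,
    LinearEquiv.coe_coe, LinearIsometryEquiv.coe_toLinearEquiv, eltOf]
  exact ⟨fun ⟨ξ, h⟩ => ⟨ξ, h.symm⟩, fun ⟨ξ, h⟩ => ⟨ξ, h.symm⟩⟩

end Aux

/-- multiplicativity of the tautological Dirac structure over `O(X)`.
With `A = A₁A₂`, one has `e_{A₁}(ξ₁) × e_{A₂}(ξ₂) ∼_{(Σ,σ)} e_A(ξ)` iff `ξ₁ = ξ₂ = ξ`;
in particular `(Σ,σ)` is a strong Dirac morphism from the product of the tautological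
Dirac structures at `(A₁,A₂)` onto the tautological Dirac structure at `A₁A₂`. -/
theorem tautological_Dirac_structure_multiplicative
    {X : Type*} [NormedAddCommGroup X] [InnerProductSpace ℝ X] [FiniteDimensional ℝ X]
    (A₁ A₂ : X ≃ₗᵢ[ℝ] X) :
    (∀ ξ ξ₁ ξ₂ : X,
        multRel A₂ (prodElt A₁ A₂ ξ₁ ξ₂) (eltOf (A₂.trans A₁) ξ) ↔ (ξ₁ = ξ ∧ ξ₂ = ξ)) ∧
    (∀ y : X × X,
        (∃ ξ₁ ξ₂ : X, multRel A₂ (prodElt A₁ A₂ ξ₁ ξ₂) y)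
          ↔ y ∈ lagrangianOf (A₂.trans A₁)) ∧
    (∀ ξ₁ ξ₂ : X, multRel A₂ (prodElt A₁ A₂ ξ₁ ξ₂) 0 → ξ₁ = 0 ∧ ξ₂ = 0) := by
  refine ⟨fun ξ ξ₁ ξ₂ => ?_, fun y => ?_, fun ξ₁ ξ₂ h => ?_⟩
  · rw [multRel_iff]
    constructor
    · rintro ⟨rfl, h⟩
      have := eltOf_inj (A₂.trans A₁) h
      exact ⟨this.symm, this.symm⟩
    · rintro ⟨rfl, rfl⟩
      exact ⟨rfl, rfl⟩
  · constructor
    · rintro ⟨ξ₁, ξ₂, h⟩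
      rw [multRel_iff] at h
      exact (mem_lagrangianOf _ _).mpr ⟨ξ₁, h.2⟩
    · intro hy
      obtain ⟨ξ, h⟩ := (mem_lagrangianOf _ _).mp hy
      exact ⟨ξ, ξ, (multRel_iff A₁ A₂ ξ ξ y).mpr ⟨rfl, h⟩⟩
  · rw [multRel_iff] at h
    obtain ⟨rfl, h2⟩ := h
    have h0 : eltOf (A₂.trans A₁) ξ₁ = eltOf (A₂.trans A₁) 0 := by
      rw [← h2]; simp [eltOf]; rfl
    have := eltOf_inj (A₂.trans A₁) h0
    exact ⟨this, this⟩
end
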